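/- arXiv:1509.03885 — 6 statements merged into one kernel-verified Lean document; each statement's English description precedes it below -/
import Mathlib

section
/- Let Λ be a unimodular lattice in ℝ^d with dual lattice Λ* = {s ∈ ℝ^d : r·s ∈ ℤ for all r ∈ Λ}, and let V ≤ ℝ^d be a subspace such that Λ ∩ V is a full-rank lattice in V, with orthogonal complement V^⊥. Then, with respect to the Euclidean norm, ω_k · Covol(Λ∩V) = ω_{d−k} · Covol(Λ* ∩ V^⊥), where k = dim V and ω_j denotes the volume of the Euclidean unit ball in ℝ^j, and Covol denotes covolume normalized so that the unit ball in the respective subspace has measure 1. -/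
open MeasureTheory Submodule Module ZSpan
open scoped RealInnerProductSpace Pointwise

/-- The dual lattice `Λ* = {s : r·s ∈ ℤ for all r ∈ Λ}`. -/
noncomputable def dualLattice {d : ℕ} (Λ : AddSubgroup (EuclideanSpace ℝ (Fin d))) :
    AddSubgroup (EuclideanSpace ℝ (Fin d)) where
  carrier := {s | ∀ r ∈ Λ, ∃ k : ℤ, ⟪r, s⟫ = (k : ℝ)}
  add_mem' := by
    intro a b ha hb r hr
    obtain ⟨k, hk⟩ := ha r hr
    obtain ⟨l, hl⟩ := hb r hr
    exact ⟨k + l, by rw [inner_add_right, hk, hl]; push_cast; ring⟩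
  zero_mem' := fun r _ => ⟨0, by simp⟩
  neg_mem' := by
    intro a ha r hr
    obtain ⟨k, hk⟩ := ha r hr
    exact ⟨-k, by rw [inner_neg_right, hk]; push_cast; ring⟩

open scoped RealInnerProductSpace Pointwise

lemma fd_of_tiling {d : ℕ} (Λ : AddSubgroup (EuclideanSpace ℝ (Fin d)))
    (D : Set (EuclideanSpace ℝ (Fin d))) (hmeas : MeasurableSet D)
    (hcov : ∀ x, ∃ r ∈ Λ, x - r ∈ D)
    (hdisj : ∀ r ∈ Λ, r ≠ 0 → interior D ∩ ((r + ·) '' interior D) = ∅)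
    (hbd : volume (D \ interior D) = 0) :
    IsAddFundamentalDomain Λ D volume := by
  constructor
  · exact hmeas.nullMeasurableSet
  · refine Filter.Eventually.of_forall fun x => ?_
    obtain ⟨r, hr, h⟩ := hcov x
    exact ⟨⟨-r, neg_mem hr⟩, by simpa [neg_add_eq_sub] using h⟩
  · intro g g' hne
    have key : ((g : ↥Λ) +ᵥ D) ∩ ((g' : ↥Λ) +ᵥ D) ⊆
        (g +ᵥ (D \ interior D)) ∪ (g' +ᵥ (D \ interior D)) := by
      rintro x ⟨hx1, hx2⟩
      obtain ⟨y, hy, rfl⟩ := hx1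
      obtain ⟨z, hz, hzy⟩ := hx2
      by_cases hyi : y ∈ interior D
      · by_cases hzi : z ∈ interior D
        · exfalso
          have hmem : ((g' : EuclideanSpace ℝ (Fin d)) - g) ∈ Λ := sub_mem g'.2 g.2
          have hne0 : ((g' : EuclideanSpace ℝ (Fin d)) - g) ≠ 0 := by
            intro h0
            exact hne (Subtype.ext (sub_eq_zero.mp h0)).symm
          have hy' : y = ((g' : EuclideanSpace ℝ (Fin d)) - g) + z := by
            have : (g' : EuclideanSpace ℝ (Fin d)) + z = (g : EuclideanSpace ℝ (Fin d)) + y := hzy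
            rw [sub_add_eq_add_sub, eq_sub_iff_add_eq, add_comm y]
            exact this.symm
          refine Set.eq_empty_iff_forall_notMem.mp (hdisj _ hmem hne0) y ⟨hyi, ⟨z, hzi, hy'.symm⟩⟩
        · right
          exact ⟨z, ⟨hz, hzi⟩, hzy⟩
      · left
        exact ⟨y, ⟨hy, hyi⟩, rfl⟩
    refine measure_mono_null key (measure_union_null ?_ ?_) <;>
      rw [measure_vadd volume _ _] <;> exact hbd

lemma exists_adapted_basis {d : ℕ} (Λ : AddSubgroup (EuclideanSpace ℝ (Fin d)))
    (hdisc : DiscreteTopology Λ)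
    (hspan : Submodule.span ℝ (Λ : Set (EuclideanSpace ℝ (Fin d))) = ⊤)
    (V : Submodule ℝ (EuclideanSpace ℝ (Fin d)))
    (hfull : Submodule.span ℝ
      ((AddSubgroup.comap (V.subtype.toAddMonoidHom) Λ : AddSubgroup ↥V) : Set ↥V) = ⊤) :
    ∃ (n : ℕ) (B : Basis (Fin n ⊕ Fin (finrank ℝ ↥Vᗮ)) ℤ (AddSubgroup.toIntSubmodule Λ))
      (bV : Basis (Fin n) ℝ ↥V),
      (Submodule.span ℤ (Set.range ⇑bV)).toAddSubgroup =
        AddSubgroup.comap (V.subtype.toAddMonoidHom) Λ ∧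
      (∀ i, ((bV i : ↥V) : EuclideanSpace ℝ (Fin d)) =
        ((B (Sum.inl i) : (AddSubgroup.toIntSubmodule Λ)) : EuclideanSpace ℝ (Fin d))) := by
  classical
  set E := EuclideanSpace ℝ (Fin d) with hE
  set Λℤ : Submodule ℤ E := AddSubgroup.toIntSubmodule Λ with hΛℤ
  haveI : DiscreteTopology Λℤ := hdisc
  haveI : IsZLattice ℝ Λℤ := ⟨by rw [AddSubgroup.coe_toIntSubmodule]; exact hspan⟩
  set G : AddSubgroup ↥V := AddSubgroup.comap (V.subtype.toAddMonoidHom) Λ with hG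
  set Gℤ : Submodule ℤ ↥V := AddSubgroup.toIntSubmodule G with hGℤ
  haveI : DiscreteTopology Gℤ := by
    refine DiscreteTopology.of_continuous_injective
      (f := fun x : Gℤ => (⟨((x : ↥V) : E), x.2⟩ : ↥Λ)) ?_ ?_
    · exact Continuous.subtype_mk (continuous_subtype_val.comp continuous_subtype_val) _
    · intro a b hab
      have h2 : ((a : ↥V) : E) = ((b : ↥V) : E) := congrArg (fun z : ↥Λ => (z : E)) hab
      exact Subtype.ext (Subtype.ext h2)
  haveI : IsZLattice ℝ Gℤ := ⟨by rw [AddSubgroup.coe_toIntSubmodule]; exact hfull⟩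
  set N' : Submodule ℤ ↥Λℤ := (V.restrictScalars ℤ).comap (Λℤ.subtype) with hN'
  let φ : N' ≃ₗ[ℤ] Gℤ :=
    { toFun := fun x => ⟨⟨((x : ↥Λℤ) : E), x.2⟩, ((x : ↥Λℤ)).2⟩
      invFun := fun y => ⟨⟨((y : ↥V) : E), y.2⟩, ((y : ↥V)).2⟩
      left_inv := fun x => rfl
      right_inv := fun y => rfl
      map_add' := fun x y => rfl
      map_smul' := fun c x => rfl }
  obtain ⟨n, snf⟩ := Submodule.smithNormalForm (Module.Free.chooseBasis ℤ ↥Λℤ) N'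
  have ha0 : ∀ i, snf.a i ≠ 0 := by
    intro i h
    have h2 := snf.snf i
    rw [h, zero_smul] at h2
    exact snf.bN.ne_zero i (Subtype.ext h2)
  have hBMmem : ∀ i, snf.bM (snf.f i) ∈ N' := by
    intro i
    have h1 : (((snf.bN i : ↥Λℤ) : E)) ∈ V := (snf.bN i).2
    have h2 : ((snf.bN i : ↥Λℤ) : E) = (snf.a i : ℝ) • ((snf.bM (snf.f i) : ↥Λℤ) : E) := by
      rw [snf.snf i]
      push_cast
      rw [Int.cast_smul_eq_zsmul]
    refine Submodule.mem_comap.mpr ?_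
    have h3 : ((snf.bM (snf.f i) : ↥Λℤ) : E)
        = ((snf.a i : ℝ))⁻¹ • ((snf.bN i : ↥Λℤ) : E) := by
      rw [h2, smul_smul, inv_mul_cancel₀ (by exact_mod_cast ha0 i), one_smul]
    show ((snf.bM (snf.f i) : ↥Λℤ) : E) ∈ V
    rw [h3]
    exact V.smul_mem _ h1
  have haunit : ∀ i, IsUnit (snf.a i) := by
    intro i
    have h := snf.repr_apply_embedding_eq_repr_smul (⟨snf.bM (snf.f i), hBMmem i⟩ : N') (i := i)
    rw [Basis.repr_self, Finsupp.single_eq_same] at h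
    rw [_root_.map_smul, Finsupp.smul_apply, smul_eq_mul] at h
    exact IsUnit.of_mul_eq_one _ h.symm
  let u : Fin n → ℤˣ := fun i => (haunit i).unit
  let c : Basis (Fin n) ℤ ↥N' := snf.bN.unitsSMul (fun i => (u i)⁻¹)
  have hc : ∀ i, ((c i : ↥Λℤ)) = snf.bM (snf.f i) := by
    intro i
    show (((snf.bN.unitsSMul fun i => (u i)⁻¹) i : ↥N') : ↥Λℤ) = _
    rw [Basis.unitsSMul_apply]
    have : (((u i)⁻¹ • snf.bN i : ↥N') : ↥Λℤ) = ((u i)⁻¹ : ℤˣ) • ((snf.bN i : ↥N') : ↥Λℤ) := rfl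
    rw [this, snf.snf i]
    rw [Units.smul_def, smul_smul]
    have hui : ((((u i)⁻¹ : ℤˣ)) : ℤ) * snf.a i = 1 := by
      have h3 : ((u i : ℤˣ) : ℤ) = snf.a i := (haunit i).unit_spec
      rw [← h3, Units.inv_mul]
    rw [hui, one_smul]
  let b₁ : Basis (Fin n) ℤ ↥Gℤ := c.map φ
  have hb₁ : ∀ i, ((b₁ i : ↥V) : E) = ((snf.bM (snf.f i) : ↥Λℤ) : E) := by
    intro i
    show (((φ (c i) : ↥Gℤ) : ↥V) : E) = _
    rw [← hc i]
    rfl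
  -- cardinalities
  have hn : finrank ℝ ↥V = n := by
    have h1 : finrank ℤ ↥Gℤ = finrank ℝ ↥V := ZLattice.rank ℝ Gℤ
    rw [← h1, finrank_eq_card_basis b₁, Fintype.card_fin]
  have hcard : Fintype.card (Module.Free.ChooseBasisIndex ℤ ↥Λℤ) = d := by
    rw [← finrank_eq_card_basis snf.bM, ZLattice.rank ℝ Λℤ, finrank_euclideanSpace_fin]
  have hsum : n + finrank ℝ ↥Vᗮ = d := by
    rw [← hn, V.finrank_add_finrank_orthogonal, finrank_euclideanSpace_fin]
  have hcompl : Fintype.card (Fin (finrank ℝ ↥Vᗮ)) = Fintype.card ↥(Set.range ⇑snf.f)ᶜ := by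
    rw [Fintype.card_fin, Fintype.card_compl_set, hcard]
    rw [Set.card_range_of_injective snf.f.injective, Fintype.card_fin]
    omega
  let e : Fin n ⊕ Fin (finrank ℝ ↥Vᗮ) ≃ Module.Free.ChooseBasisIndex ℤ ↥Λℤ :=
    (Equiv.sumCongr (Equiv.ofInjective _ snf.f.injective)
      (Fintype.equivOfCardEq hcompl)).trans (Equiv.Set.sumCompl (Set.range ⇑snf.f))
  have he : ∀ i, e (Sum.inl i) = snf.f i := by
    intro i
    simp [e]
  let B : Basis (Fin n ⊕ Fin (finrank ℝ ↥Vᗮ)) ℤ ↥Λℤ := snf.bM.reindex e.symm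
  have hB : ∀ i, B (Sum.inl i) = snf.bM (snf.f i) := by
    intro i
    rw [Basis.reindex_apply, Equiv.symm_symm, he]
  let bV : Basis (Fin n) ℝ ↥V := b₁.ofZLatticeBasis ℝ Gℤ
  refine ⟨n, B, bV, ?_, ?_⟩
  · rw [show Submodule.span ℤ (Set.range ⇑bV) = Gℤ from b₁.ofZLatticeBasis_span ℝ]
    exact AddSubgroup.toIntSubmodule_toAddSubgroup G
  · intro i
    rw [show (bV i : ↥V) = (b₁ i : ↥V) from b₁.ofZLatticeBasis_apply ℝ Gℤ i, hb₁ i, hB i]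

set_option maxHeartbeats 2000000 in
/-- Lemma 5.2 (covolumes of dual sublattices), with the covolume of a lattice `Γ` in a
subspace `W` normalized so that the unit ball of `W` has measure one: if `Λ` is unimodular
and `Λ ∩ V` is a full-rank lattice in `V`, then
`ω_k · Covol(Λ ∩ V) = ω_{d-k} · Covol(Λ* ∩ V^⊥)`, where `ω_j` is the volume of the
Euclidean unit ball of the respective subspace. -/
theorem stmt_8 (d : ℕ) (hd : 1 ≤ d)
    (Λ : AddSubgroup (EuclideanSpace ℝ (Fin d)))
    (hdisc : DiscreteTopology Λ)
    (hspan : Submodule.span ℝ (Λ : Set (EuclideanSpace ℝ (Fin d))) = ⊤)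
    (hunimod : ∃ D : Set (EuclideanSpace ℝ (Fin d)), MeasurableSet D ∧
      (∀ x, ∃ r ∈ Λ, x - r ∈ D) ∧
      (∀ r ∈ Λ, r ≠ 0 → interior D ∩ ((r + ·) '' interior D) = ∅) ∧
      volume (D \ interior D) = 0 ∧ volume D = 1)
    (V : Submodule ℝ (EuclideanSpace ℝ (Fin d)))
    (hfull : Submodule.span ℝ
      ((AddSubgroup.comap (V.subtype.toAddMonoidHom) Λ : AddSubgroup ↥V) : Set ↥V) = ⊤)
    (D₁ : Set ↥V) (D₂ : Set ↥(Vᗮ))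
    (hD₁ : IsAddFundamentalDomain (AddSubgroup.comap (V.subtype.toAddMonoidHom) Λ) D₁
      (volume : Measure ↥V))
    (hD₂ : IsAddFundamentalDomain
      (AddSubgroup.comap ((Vᗮ).subtype.toAddMonoidHom) (dualLattice Λ)) D₂
      (volume : Measure ↥(Vᗮ))) :
    volume (Metric.ball (0 : ↥V) 1) *
        (((volume (Metric.ball (0 : ↥V) 1))⁻¹ • (volume : Measure ↥V)) D₁) =
      volume (Metric.ball (0 : ↥(Vᗮ)) 1) *
        (((volume (Metric.ball (0 : ↥(Vᗮ)) 1))⁻¹ • (volume : Measure ↥(Vᗮ))) D₂) := by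
  classical
  -- reduce the unit-ball normalization factors
  have hball₁ : volume (Metric.ball (0 : ↥V) 1) ≠ 0 := (Metric.measure_ball_pos volume 0 one_pos).ne'
  have hball₁' : volume (Metric.ball (0 : ↥V) 1) ≠ ⊤ := measure_ball_lt_top.ne
  have hball₂ : volume (Metric.ball (0 : ↥Vᗮ) 1) ≠ 0 := (Metric.measure_ball_pos volume 0 one_pos).ne'
  have hball₂' : volume (Metric.ball (0 : ↥Vᗮ) 1) ≠ ⊤ := measure_ball_lt_top.ne
  rw [Measure.smul_apply, smul_eq_mul, ← mul_assoc, ENNReal.mul_inv_cancel hball₁ hball₁',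
    one_mul, Measure.smul_apply, smul_eq_mul, ← mul_assoc,
    ENNReal.mul_inv_cancel hball₂ hball₂', one_mul]
  -- setup
  obtain ⟨D, hDmeas, hDcov, hDdisj, hDbd, hDvol⟩ := hunimod
  obtain ⟨n, B, bV, hGspan, hBV⟩ := exists_adapted_basis Λ hdisc hspan V hfull
  let m := finrank ℝ ↥Vᗮ
  have hm : m = finrank ℝ ↥Vᗮ := rfl
  let Λℤ : Submodule ℤ (EuclideanSpace ℝ (Fin d)) := AddSubgroup.toIntSubmodule Λ
  haveI : DiscreteTopology Λℤ := hdisc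
  haveI : IsZLattice ℝ Λℤ := ⟨by rw [AddSubgroup.coe_toIntSubmodule]; exact hspan⟩
  let bE : Basis (Fin n ⊕ Fin m) ℝ (EuclideanSpace ℝ (Fin d)) := B.ofZLatticeBasis ℝ Λℤ
  have hbE : ∀ s, bE s = ((B s : ↥Λℤ) : EuclideanSpace ℝ (Fin d)) :=
    fun s => B.ofZLatticeBasis_apply ℝ Λℤ s
  have hn : finrank ℝ ↥V = n := by rw [finrank_eq_card_basis bV, Fintype.card_fin]
  have hsum : n + m = d := by
    rw [← hn, hm, V.finrank_add_finrank_orthogonal, finrank_euclideanSpace_fin]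
  haveI : Nonempty (Fin n ⊕ Fin m) := by
    rcases Nat.eq_zero_or_pos n with h | h
    · exact ⟨Sum.inr ⟨0, by omega⟩⟩
    · exact ⟨Sum.inl ⟨0, h⟩⟩
  -- orthonormal bases
  let e₁ : OrthonormalBasis (Fin n) ℝ ↥V := (stdOrthonormalBasis ℝ ↥V).reindex (finCongr hn)
  let e₂ : OrthonormalBasis (Fin m) ℝ ↥Vᗮ :=
    (stdOrthonormalBasis ℝ ↥Vᗮ).reindex (finCongr hm.symm)
  let w : Fin n ⊕ Fin m → EuclideanSpace ℝ (Fin d) :=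
    Sum.elim (fun i => ((e₁ i : ↥V) : EuclideanSpace ℝ (Fin d)))
      (fun j => ((e₂ j : ↥Vᗮ) : EuclideanSpace ℝ (Fin d)))
  have hwinl : ∀ i, w (Sum.inl i) = ((e₁ i : ↥V) : EuclideanSpace ℝ (Fin d)) := fun _ => rfl
  have hwinr : ∀ j, w (Sum.inr j) = ((e₂ j : ↥Vᗮ) : EuclideanSpace ℝ (Fin d)) := fun _ => rfl
  have hw : Orthonormal ℝ w := by
    constructor
    · rintro (i | j)
      · rw [hwinl, Submodule.norm_coe]
        exact e₁.orthonormal.1 i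
      · rw [hwinr, Submodule.norm_coe]
        exact e₂.orthonormal.1 j
    · rintro (i | j) (i' | j') hne
      · rw [hwinl, hwinl, ← Submodule.coe_inner]
        exact e₁.orthonormal.2 (fun h => hne (congrArg Sum.inl h))
      · rw [hwinl, hwinr]
        exact inner_right_of_mem_orthogonal (Submodule.coe_mem (e₁ i)) (Submodule.coe_mem (e₂ j'))
      · rw [hwinr, hwinl, real_inner_comm]
        exact inner_right_of_mem_orthogonal (Submodule.coe_mem (e₁ i')) (Submodule.coe_mem (e₂ j))
      · rw [hwinr, hwinr, ← Submodule.coe_inner]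
        exact e₂.orthonormal.2 (fun h => hne (congrArg Sum.inr h))
  have hcardw : Fintype.card (Fin n ⊕ Fin m) = finrank ℝ (EuclideanSpace ℝ (Fin d)) := by
    simp [finrank_euclideanSpace_fin, hsum]
  let eEb : Basis (Fin n ⊕ Fin m) ℝ (EuclideanSpace ℝ (Fin d)) :=
    basisOfOrthonormalOfCardEqFinrank hw hcardw
  have heEb : ⇑eEb = w := coe_basisOfOrthonormalOfCardEqFinrank hw hcardw
  have hwON : Orthonormal ℝ ⇑eEb := by rw [heEb]; exact hw
  let onE : OrthonormalBasis (Fin n ⊕ Fin m) ℝ (EuclideanSpace ℝ (Fin d)) :=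
    eEb.toOrthonormalBasis hwON
  have hrepr : ∀ (x : EuclideanSpace ℝ (Fin d)) s, eEb.repr x s = ⟪w s, x⟫ := by
    intro x s
    have h1 : onE.toBasis = eEb := eEb.toBasis_toOrthonormalBasis hwON
    rw [← h1, onE.coe_toBasis_repr_apply, onE.repr_apply_apply]
    congr 1
    rw [show (onE : Fin n ⊕ Fin m → EuclideanSpace ℝ (Fin d)) s = eEb s from
      congrFun (eEb.coe_toOrthonormalBasis hwON) s, heEb]
  -- measure of fundamental domains of orthonormal bases
  have hfdON : ∀ {ι : Type} [Fintype ι] {F : Type} [NormedAddCommGroup F]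
      [InnerProductSpace ℝ F] [FiniteDimensional ℝ F] [MeasurableSpace F] [BorelSpace F]
      (b : OrthonormalBasis ι ℝ F), volume (fundamentalDomain b.toBasis) = 1 := by
    intro ι _ F _ _ _ _ _ b
    rw [measure_congr (fundamentalDomain_ae_parallelepiped b.toBasis volume),
      show (b.toBasis : ι → F) = ⇑b from b.coe_toBasis]
    exact b.volume_parallelepiped
  have hfd_eEb : volume (fundamentalDomain eEb) = 1 := by
    rw [← eEb.toBasis_toOrthonormalBasis hwON]
    exact hfdON onE
  -- full lattice has determinant one
  have hΛgrp : (Submodule.span ℤ (Set.range ⇑bE)).toAddSubgroup = Λ := by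
    rw [B.ofZLatticeBasis_span ℝ]
    exact AddSubgroup.toIntSubmodule_toAddSubgroup Λ
  have h1 : volume (fundamentalDomain bE) = 1 := by
    have hfdΛ : IsAddFundamentalDomain (Submodule.span ℤ (Set.range ⇑bE)).toAddSubgroup D
        volume := by
      rw [hΛgrp]; exact fd_of_tiling Λ D hDmeas hDcov hDdisj hDbd
    haveI : Countable ↥(Submodule.span ℤ (Set.range ⇑bE)).toAddSubgroup :=
      inferInstanceAs (Countable ↥(Submodule.span ℤ (Set.range ⇑bE)))
    rw [(ZSpan.isAddFundamentalDomain' bE volume).measure_eq hfdΛ, hDvol]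
  have hdet1 : |eEb.det ⇑bE| = 1 := by
    have h9 := ZSpan.measure_fundamentalDomain bE volume eEb
    rw [h1, hfd_eEb, mul_one] at h9
    exact ENNReal.ofReal_eq_one.mp h9.symm
  -- matrices
  let π := orthogonalProjection Vᗮ
  let p : Fin m → ↥Vᗮ := fun j => π (bE (Sum.inr j))
  let A : Matrix (Fin n) (Fin n) ℝ := e₁.toBasis.toMatrix ⇑bV
  let P : Matrix (Fin m) (Fin m) ℝ := e₂.toBasis.toMatrix p
  let X : Matrix (Fin n) (Fin m) ℝ := Matrix.of fun i j => eEb.repr (bE (Sum.inr j)) (Sum.inl i)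
  have hproj : ∀ (x : EuclideanSpace ℝ (Fin d)) (s : ↥Vᗮ),
      ⟪x, (s : EuclideanSpace ℝ (Fin d))⟫ = ⟪π x, s⟫ := by
    intro x s
    have h0 : ⟪x - (π x : EuclideanSpace ℝ (Fin d)), (s : EuclideanSpace ℝ (Fin d))⟫ = 0 := by
      rw [real_inner_comm]
      exact inner_right_of_mem_orthogonal s.2 (Submodule.sub_starProjection_mem_orthogonal (K := Vᗮ) x)
    have h4 : ⟪(π x : ↥Vᗮ), s⟫ =
        ⟪((π x : ↥Vᗮ) : EuclideanSpace ℝ (Fin d)), (s : EuclideanSpace ℝ (Fin d))⟫ :=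
      Submodule.coe_inner _ _ _
    have h5 := inner_sub_left (𝕜 := ℝ) x ((π x : ↥Vᗮ) : EuclideanSpace ℝ (Fin d))
      (s : EuclideanSpace ℝ (Fin d))
    rw [h4]
    rw [h0] at h5
    linarith
  have hVmem : ∀ i, bE (Sum.inl i) ∈ V := by
    intro i
    rw [hbE, ← hBV i]
    exact Submodule.coe_mem (bV i)
  have hcoeV : ∀ i, ((bV i : ↥V) : EuclideanSpace ℝ (Fin d)) = bE (Sum.inl i) := by
    intro i; rw [hBV i, hbE]
  have he₁repr : ∀ (x : ↥V) i, e₁.toBasis.repr x i = ⟪e₁ i, x⟫ := by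
    intro x i
    rw [e₁.coe_toBasis_repr_apply, e₁.repr_apply_apply]
  have he₂repr : ∀ (x : ↥Vᗮ) j, e₂.toBasis.repr x j = ⟪e₂ j, x⟫ := by
    intro x j
    rw [e₂.coe_toBasis_repr_apply, e₂.repr_apply_apply]
  have hblock : eEb.toMatrix ⇑bE = Matrix.fromBlocks A X 0 P := by
    ext s t
    rw [Basis.toMatrix_apply, hrepr]
    cases s with
    | inl i =>
      cases t with
      | inl i' =>
        rw [Matrix.fromBlocks_apply₁₁]
        rw [show A i i' = e₁.toBasis.repr (bV i') i from rfl, he₁repr, Submodule.coe_inner,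
          hcoeV i', hwinl]
      | inr j' =>
        rw [Matrix.fromBlocks_apply₁₂]
        rw [show X i j' = eEb.repr (bE (Sum.inr j')) (Sum.inl i) from rfl, hrepr]
    | inr j =>
      cases t with
      | inl i' =>
        rw [Matrix.fromBlocks_apply₂₁, Matrix.zero_apply, hwinr, real_inner_comm]
        exact inner_right_of_mem_orthogonal (hVmem i') (Submodule.coe_mem (e₂ j))
      | inr j' =>
        rw [Matrix.fromBlocks_apply₂₂]
        rw [show P j j' = e₂.toBasis.repr (p j') j from rfl, he₂repr]
        rw [hwinr, real_inner_comm, hproj (bE (Sum.inr j')) (e₂ j), real_inner_comm]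
  have hdetsplit : |A.det| * |P.det| = 1 := by
    have h6 := hdet1
    rw [Basis.det_apply, hblock, Matrix.det_fromBlocks_zero₂₁, abs_mul] at h6
    exact h6
  have hA0 : |A.det| ≠ 0 := by
    intro h; rw [h, zero_mul] at hdetsplit; exact zero_ne_one hdetsplit
  have hP0 : P.det ≠ 0 := by
    intro h; rw [h, abs_zero, mul_zero] at hdetsplit; exact zero_ne_one hdetsplit
  -- basis from p, and its dual basis
  have hPunit : IsUnit (e₂.toBasis.det p) := by
    rw [Basis.det_apply]
    exact isUnit_iff_ne_zero.mpr hP0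
  obtain ⟨hLI, hSP⟩ := (Module.Basis.is_basis_iff_det e₂.toBasis).mpr hPunit
  let pB : Basis (Fin m) ℝ ↥Vᗮ := Basis.mk hLI hSP.ge
  have hpB : ⇑pB = p := Basis.coe_mk _ _
  let bil : LinearMap.BilinForm ℝ ↥Vᗮ := innerₗ ↥Vᗮ
  have hbil : ∀ x y : ↥Vᗮ, bil x y = ⟪x, y⟫ := fun _ _ => rfl
  have hnd : bil.Nondegenerate := by
    refine ⟨fun x hx => ?_, fun x hx => ?_⟩ <;> exact inner_self_eq_zero.mp (hx x)
  have hsym : bil.IsSymm := by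
    refine ⟨fun x y => ?_⟩
    rw [hbil, hbil, real_inner_comm]
  let qB : Basis (Fin m) ℝ ↥Vᗮ := bil.dualBasis hnd pB
  have hq : ∀ i j, ⟪p i, qB j⟫ = if i = j then 1 else 0 := by
    intro i j
    rw [← hbil, show qB = bil.dualBasis hnd pB from rfl, ← hpB,
      LinearMap.BilinForm.apply_dualBasis_right hnd hsym pB i j]
  have hqrepr : ∀ (s : ↥Vᗮ) j, qB.repr s j = ⟪p j, s⟫ := by
    intro s j
    rw [show qB = bil.dualBasis hnd pB from rfl,
      LinearMap.BilinForm.dualBasis_repr_apply hnd pB s j, hbil, hpB, real_inner_comm]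
  -- lattice vectors belong to Λ
  have hBmem : ∀ s : Fin n ⊕ Fin m, bE s ∈ Λ := by
    intro s
    rw [hbE]
    exact (B s).2
  have hpinner : ∀ (j : Fin m) (s : ↥Vᗮ),
      ⟪bE (Sum.inr j), (s : EuclideanSpace ℝ (Fin d))⟫ = ⟪p j, s⟫ :=
    fun j s => hproj (bE (Sum.inr j)) s
  -- the dual lattice intersected with Vᗮ is the ℤ-span of qB
  have hG2 : AddSubgroup.toIntSubmodule
      (AddSubgroup.comap ((Vᗮ).subtype.toAddMonoidHom) (dualLattice Λ)) =
      Submodule.span ℤ (Set.range ⇑qB) := by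
    ext s
    have hmem0 : s ∈ AddSubgroup.toIntSubmodule
        (AddSubgroup.comap ((Vᗮ).subtype.toAddMonoidHom) (dualLattice Λ)) ↔
        (∀ r ∈ Λ, ∃ k : ℤ, ⟪r, (s : EuclideanSpace ℝ (Fin d))⟫ = (k : ℝ)) := Iff.rfl
    rw [hmem0, qB.mem_span_iff_repr_mem ℤ s]
    constructor
    · intro hs j
      obtain ⟨k, hk⟩ := hs (bE (Sum.inr j)) (hBmem (Sum.inr j))
      refine ⟨k, ?_⟩
      rw [hqrepr s j, ← hpinner j s, hk]
      simp
    · intro hs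
      choose k hk using hs
      intro r hr
      have hrE : r = ∑ t, B.repr ⟨r, hr⟩ t • ((B t : ↥Λℤ) : EuclideanSpace ℝ (Fin d)) := by
        have h10 := congrArg (fun z : ↥Λℤ => (z : EuclideanSpace ℝ (Fin d)))
          (B.sum_repr ⟨r, hr⟩)
        change _ = r at h10
        refine h10.symm.trans ?_
        simp only [AddSubmonoidClass.coe_finset_sum, SetLike.val_smul]
      have hterm : ∀ t, ⟪B.repr (⟨r, hr⟩ : ↥Λℤ) t • ((B t : ↥Λℤ) : EuclideanSpace ℝ (Fin d)),
          (s : EuclideanSpace ℝ (Fin d))⟫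
          = (B.repr (⟨r, hr⟩ : ↥Λℤ) t : ℝ) *
            ⟪((B t : ↥Λℤ) : EuclideanSpace ℝ (Fin d)), (s : EuclideanSpace ℝ (Fin d))⟫ := by
        intro t
        rw [← Int.cast_smul_eq_zsmul ℝ, real_inner_smul_left]
      have hinl : ∀ i : Fin n, ⟪((B (Sum.inl i) : ↥Λℤ) : EuclideanSpace ℝ (Fin d)),
          (s : EuclideanSpace ℝ (Fin d))⟫ = 0 := by
        intro i
        rw [← hbE]
        exact inner_right_of_mem_orthogonal (hVmem i) s.2
      have hinr : ∀ t : Fin m, ⟪((B (Sum.inr t) : ↥Λℤ) : EuclideanSpace ℝ (Fin d)),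
          (s : EuclideanSpace ℝ (Fin d))⟫ = ((k t : ℤ) : ℝ) := by
        intro t
        have h13 : ⟪((B (Sum.inr t) : ↥Λℤ) : EuclideanSpace ℝ (Fin d)),
            (s : EuclideanSpace ℝ (Fin d))⟫ = ⟪p t, s⟫ := by
          rw [← hbE]; exact hpinner t s
        rw [h13, ← hqrepr s t, ← hk t]
        simp
      refine ⟨∑ t : Fin m, (B.repr (⟨r, hr⟩ : ↥Λℤ) (Sum.inr t)) * k t, ?_⟩
      show ⟪r, (s : EuclideanSpace ℝ (Fin d))⟫ = _
      conv_lhs => rw [hrE]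
      rw [sum_inner, Fintype.sum_sum_type]
      simp only [hterm, hinl, hinr, mul_zero, Finset.sum_const_zero, zero_add]
      push_cast
      rfl
  have hG2' : (Submodule.span ℤ (Set.range ⇑qB)).toAddSubgroup =
      AddSubgroup.comap ((Vᗮ).subtype.toAddMonoidHom) (dualLattice Λ) := by
    rw [← hG2]
    exact AddSubgroup.toIntSubmodule_toAddSubgroup _
  -- measures of D₁ and D₂
  have hfd_e₁ : volume (fundamentalDomain e₁.toBasis) = 1 := hfdON e₁
  have hfd_e₂ : volume (fundamentalDomain e₂.toBasis) = 1 := hfdON e₂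
  haveI : Countable ↥(Submodule.span ℤ (Set.range ⇑bV)).toAddSubgroup :=
    inferInstanceAs (Countable ↥(Submodule.span ℤ (Set.range ⇑bV)))
  haveI : Countable ↥(Submodule.span ℤ (Set.range ⇑qB)).toAddSubgroup :=
    inferInstanceAs (Countable ↥(Submodule.span ℤ (Set.range ⇑qB)))
  have hvolD₁ : volume D₁ = ENNReal.ofReal |e₁.toBasis.det ⇑bV| := by
    have hfdD₁ : IsAddFundamentalDomain (Submodule.span ℤ (Set.range ⇑bV)).toAddSubgroup D₁
        volume := by rw [hGspan]; exact hD₁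
    rw [← (ZSpan.isAddFundamentalDomain' bV volume).measure_eq hfdD₁,
      ZSpan.measure_fundamentalDomain bV volume e₁.toBasis, hfd_e₁, mul_one]
  have hvolD₂ : volume D₂ = ENNReal.ofReal |e₂.toBasis.det ⇑qB| := by
    have hfdD₂ : IsAddFundamentalDomain (Submodule.span ℤ (Set.range ⇑qB)).toAddSubgroup D₂
        volume := by rw [hG2']; exact hD₂
    rw [← (ZSpan.isAddFundamentalDomain' qB volume).measure_eq hfdD₂,
      ZSpan.measure_fundamentalDomain qB volume e₂.toBasis, hfd_e₂, mul_one]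
  -- the transpose relation between P and Q
  let Q : Matrix (Fin m) (Fin m) ℝ := e₂.toBasis.toMatrix ⇑qB
  have hPQ : P.transpose * Q = 1 := by
    ext j j'
    rw [Matrix.mul_apply, Matrix.one_apply]
    have hterm2 : ∀ l, P.transpose j l * Q l j' = ⟪p j, (e₂ l : ↥Vᗮ)⟫ * ⟪(e₂ l : ↥Vᗮ), qB j'⟫ := by
      intro l
      rw [Matrix.transpose_apply]
      rw [show P l j = e₂.toBasis.repr (p j) l from rfl, he₂repr,
        show Q l j' = e₂.toBasis.repr (qB j') l from rfl, he₂repr,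
        real_inner_comm (e₂ l) (p j)]
    simp only [hterm2]
    rw [e₂.sum_inner_mul_inner (p j) (qB j'), hq j j']
  have hQdet : P.det * Q.det = 1 := by
    have h11 := congrArg Matrix.det hPQ
    rwa [Matrix.det_mul, Matrix.det_transpose, Matrix.det_one] at h11
  have habsQ : |Q.det| = |A.det| := by
    have h12 : |P.det| * |Q.det| = 1 := by rw [← abs_mul, hQdet, abs_one]
    calc |Q.det| = |Q.det| * (|A.det| * |P.det|) := by rw [hdetsplit, mul_one]
      _ = |A.det| * (|P.det| * |Q.det|) := by ring
      _ = |A.det| := by rw [h12, mul_one]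
  rw [hvolD₁, hvolD₂,
    show e₁.toBasis.det ⇑bV = A.det from Basis.det_apply _ _,
    show e₂.toBasis.det ⇑qB = Q.det from Basis.det_apply _ _, habsQ]
end

section
/- Fix α, β > 0 and a function ψ : (0,∞) → (0,∞) such that q ↦ q^n ψ^m(q) is nonincreasing and ∫₁^∞ q^{n−1} ψ^m(q) dq = ∞. Then there exists a sequence of integers (N_k)_{k≥1}, each a power of 2 and each at least 2, such that for all k ≥ 1: β ≤ F_ψ(Q^k, Q^{k+1}) ≤ β + M_ψ·α·log 2, where N^k = N₁⋯N_k, Q^k = (N^k)^α, M_ψ = ψ^m(1), and F_ψ(Q₁,Q₂) = ∫_{Q₁}^{Q₂} q^{n−1} ψ^m(q) dq. -/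
open MeasureTheory

/-- Choice of the sequence `(N_k)`: given `α, β > 0` and a nice approximation function `ψ`
(i.e. `q ↦ qⁿ ψ(q)^m` nonincreasing and `∫₁^∞ q^{n-1} ψ(q)^m dq = ∞`), there is a sequence
of powers of two `N_k ≥ 2` such that, with `N^k = N₁⋯N_k` and `Q^k = (N^k)^α`,
`β ≤ F_ψ(Q^k, Q^{k+1}) ≤ β + ψ(1)^m · α · log 2` for all `k`. -/
theorem stmt_9 (m n : ℕ) (hm : 1 ≤ m) (hn : 1 ≤ n)
    (α β : ℝ) (hα : 0 < α) (hβ : 0 < β)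
    (ψ : ℝ → ℝ) (hψpos : ∀ q, 0 < q → 0 < ψ q)
    (hφ : AntitoneOn (fun q => q ^ n * ψ q ^ m) (Set.Ioi 0))
    (hdiv : ∫⁻ q in Set.Ioi (1 : ℝ), ENNReal.ofReal (q ^ (n - 1) * ψ q ^ m) = ⊤) :
    ∃ Nseq : ℕ → ℕ, (∀ k, ∃ j : ℕ, 1 ≤ j ∧ Nseq k = 2 ^ j) ∧
      ∀ k : ℕ,
        β ≤ (∫ q in ((∏ i ∈ Finset.range k, (Nseq i : ℝ)) ^ α)..
              ((∏ i ∈ Finset.range (k + 1), (Nseq i : ℝ)) ^ α), q ^ (n - 1) * ψ q ^ m) ∧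
        (∫ q in ((∏ i ∈ Finset.range k, (Nseq i : ℝ)) ^ α)..
              ((∏ i ∈ Finset.range (k + 1), (Nseq i : ℝ)) ^ α), q ^ (n - 1) * ψ q ^ m) ≤
          β + ψ 1 ^ m * α * Real.log 2 := by
  set f : ℝ → ℝ := fun q => q ^ (n - 1) * ψ q ^ m with hf
  set φ : ℝ → ℝ := fun q => q ^ n * ψ q ^ m with hφdef
  -- basic facts
  have hfq : ∀ q : ℝ, 0 < q → f q = φ q / q := by
    intro q hq
    have : q ^ (n - 1) * q = q ^ n := by
      rw [← pow_succ, Nat.sub_add_cancel hn]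
    field_simp [hf, hφdef]
    show q ^ (n - 1) * ψ q ^ m * q = q ^ n * ψ q ^ m
    rw [← this]; ring
  have hφnonneg : ∀ q : ℝ, 0 < q → 0 ≤ φ q := by
    intro q hq
    exact mul_nonneg (pow_nonneg hq.le n) (pow_nonneg (hψpos q hq).le m)
  have hfnonneg : ∀ q : ℝ, 0 < q → 0 ≤ f q := by
    intro q hq
    exact mul_nonneg (pow_nonneg hq.le (n - 1)) (pow_nonneg (hψpos q hq).le m)
  have fanti : AntitoneOn f (Set.Ioi 0) := by
    intro a ha b hb hab
    rw [Set.mem_Ioi] at ha hb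
    rw [hfq a ha, hfq b hb]
    exact div_le_div₀ (hφnonneg a ha) (hφ ha hb hab) ha hab
  have hInt : ∀ a b : ℝ, 0 < a → 0 < b → IntervalIntegrable f volume a b := by
    intro a b ha hb
    refine (fanti.mono ?_).intervalIntegrable
    intro x hx
    rw [Set.mem_uIcc] at hx
    rw [Set.mem_Ioi]
    rcases hx with ⟨h1, _⟩ | ⟨h1, _⟩
    · exact lt_of_lt_of_le ha h1
    · exact lt_of_lt_of_le hb h1
  -- upper bound for an interval
  have hUB : ∀ a b : ℝ, 1 ≤ a → a ≤ b →
      (∫ q in a..b, f q) ≤ ψ 1 ^ m * Real.log (b / a) := by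
    intro a b ha hab
    have ha0 : (0:ℝ) < a := lt_of_lt_of_le one_pos ha
    have hb0 : (0:ℝ) < b := lt_of_lt_of_le ha0 hab
    have hφ1 : φ 1 = ψ 1 ^ m := by simp [hφdef]
    have h1 : (∫ q in a..b, f q) ≤ ∫ q in a..b, ψ 1 ^ m * (1 / q) := by
      apply intervalIntegral.integral_mono_on hab (hInt a b ha0 hb0)
      · exact (ContinuousOn.mul continuousOn_const
          ((continuousOn_const.div continuousOn_id (fun x hx => by
            rw [Set.mem_uIcc] at hx
            rcases hx with ⟨h1, _⟩ | ⟨h1, _⟩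
            · exact ne_of_gt (lt_of_lt_of_le ha0 h1)
            · exact ne_of_gt (lt_of_lt_of_le hb0 h1))))).intervalIntegrable
      · intro x hx
        have hx0 : (0:ℝ) < x := lt_of_lt_of_le ha0 hx.1
        rw [hfq x hx0]
        rw [div_eq_mul_inv, mul_one_div, div_eq_mul_inv]
        apply mul_le_mul_of_nonneg_right _ (inv_nonneg.2 hx0.le)
        rw [← hφ1]
        exact hφ (Set.mem_Ioi.mpr one_pos) (Set.mem_Ioi.mpr hx0) (le_trans ha hx.1)
    calc (∫ q in a..b, f q) ≤ ∫ q in a..b, ψ 1 ^ m * (1 / q) := h1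
      _ = ψ 1 ^ m * ∫ q in a..b, 1 / q := intervalIntegral.integral_const_mul _ _
      _ = ψ 1 ^ m * Real.log (b / a) := by
          rw [integral_one_div (fun h => by
            rw [Set.mem_uIcc] at h
            rcases h with ⟨h1, _⟩ | ⟨h1, _⟩
            · exact absurd h1 (not_le.2 ha0)
            · exact absurd h1 (not_le.2 hb0))]
  -- integral nonneg
  have hNN : ∀ a b : ℝ, 0 < a → a ≤ b → 0 ≤ ∫ q in a..b, f q := by
    intro a b ha hab
    apply intervalIntegral.integral_nonneg hab
    intro u hu
    exact hfnonneg u (lt_of_lt_of_le ha hu.1)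
  -- additivity
  have hAdd : ∀ a b c : ℝ, 0 < a → 0 < b → 0 < c →
      (∫ q in a..b, f q) + ∫ q in b..c, f q = ∫ q in a..c, f q := by
    intro a b c ha hb hc
    exact intervalIntegral.integral_add_adjacent_intervals (hInt a b ha hb) (hInt b c hb hc)
  -- divergence: integrals from 1 are unbounded
  have hGrow : ∀ C : ℝ, ∃ X : ℝ, 1 ≤ X ∧ C ≤ ∫ q in (1:ℝ)..X, f q := by
    intro C
    have hU : Set.Ioi (1:ℝ) = ⋃ k : ℕ, Set.Ioc (1:ℝ) ((k:ℝ) + 1) := by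
      ext x
      simp only [Set.mem_Ioi, Set.mem_iUnion, Set.mem_Ioc]
      constructor
      · intro hx
        obtain ⟨k, hk⟩ := exists_nat_ge x
        exact ⟨k, hx, le_trans hk (by linarith)⟩
      · rintro ⟨k, hk, _⟩; exact hk
    have hdir : Directed (· ⊆ ·) (fun k : ℕ => Set.Ioc (1:ℝ) ((k:ℝ) + 1)) := by
      intro i j
      refine ⟨max i j, Set.Ioc_subset_Ioc_right (by push_cast; simp), 
        Set.Ioc_subset_Ioc_right (by push_cast; simp)⟩
    rw [hU, setLIntegral_iUnion_of_directed _ hdir] at hdiv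
    have : ENNReal.ofReal C < ⨆ k : ℕ, ∫⁻ q in Set.Ioc (1:ℝ) ((k:ℝ)+1),
        ENNReal.ofReal (f q) := by
      rw [hdiv]; exact ENNReal.ofReal_lt_top
    obtain ⟨k, hk⟩ := lt_iSup_iff.mp this
    have hX1 : (1:ℝ) ≤ (k:ℝ) + 1 := by
      have : (0:ℝ) ≤ (k:ℝ) := Nat.cast_nonneg k
      linarith
    have heq : ENNReal.ofReal (∫ q in (1:ℝ)..((k:ℝ)+1), f q)
        = ∫⁻ q in Set.Ioc (1:ℝ) ((k:ℝ)+1), ENNReal.ofReal (f q) := by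
      rw [intervalIntegral.integral_of_le hX1]
      refine ofReal_integral_eq_lintegral_ofReal (hInt 1 _ one_pos (by positivity)).1 ?_
      refine (ae_restrict_iff' measurableSet_Ioc).2 (ae_of_all _ ?_)
      intro q hq
      exact hfnonneg q (lt_trans one_pos hq.1)
    refine ⟨(k:ℝ)+1, hX1, ?_⟩
    by_contra hcon
    push_neg at hcon
    have := ENNReal.ofReal_le_ofReal hcon.le
    rw [heq] at this
    exact absurd (lt_of_lt_of_le hk this) (lt_irrefl _)
  -- the key step
  have key : ∀ P : ℕ, ∃ j : ℕ, 1 ≤ j ∧ (1 ≤ P →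
      β ≤ (∫ q in ((P:ℝ) ^ α)..(((P:ℝ) * 2 ^ j) ^ α), f q) ∧
      (∫ q in ((P:ℝ) ^ α)..(((P:ℝ) * 2 ^ j) ^ α), f q) ≤ β + ψ 1 ^ m * α * Real.log 2) := by
    intro P
    by_cases hP : 1 ≤ P
    · have hP1 : (1:ℝ) ≤ (P:ℝ) := by exact_mod_cast hP
      have hP0 : (0:ℝ) < (P:ℝ) := lt_of_lt_of_le one_pos hP1
      set a : ℝ := (P:ℝ) ^ α with ha_def
      have ha1 : 1 ≤ a := Real.one_le_rpow hP1 hα.le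
      have ha0 : 0 < a := lt_of_lt_of_le one_pos ha1
      set b : ℕ → ℝ := fun j => ((P:ℝ) * 2 ^ j) ^ α with hb_def
      have hbase : ∀ j : ℕ, (1:ℝ) ≤ (P:ℝ) * 2 ^ j := by
        intro j
        have : (1:ℝ) ≤ (2:ℝ) ^ j := one_le_pow₀ (by norm_num) (n := j)
        nlinarith
      have hb1 : ∀ j, 1 ≤ b j := fun j => Real.one_le_rpow (hbase j) hα.le
      have hb0 : ∀ j, 0 < b j := fun j => lt_of_lt_of_le one_pos (hb1 j)
      have hab : ∀ j, a ≤ b j := by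
        intro j
        apply Real.rpow_le_rpow hP0.le _ hα.le
        nlinarith [one_le_pow₀ (show (1:ℝ) ≤ 2 by norm_num) (n := j)]
      have hbmono : Monotone b := by
        intro i j hij
        apply Real.rpow_le_rpow (by positivity) _ hα.le
        have : (2:ℝ) ^ i ≤ 2 ^ j := pow_le_pow_right₀ (by norm_num) hij
        nlinarith
      have hbstep : ∀ j : ℕ, b (j + 1) = b j * (2:ℝ) ^ α := by
        intro j
        rw [hb_def]
        simp only []
        rw [pow_succ, ← mul_assoc, Real.mul_rpow (by positivity) (by norm_num)]
      have hstepUB : ∀ j : ℕ, (∫ q in (b j)..(b (j+1)), f q) ≤ ψ 1 ^ m * (α * Real.log 2) := by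
        intro j
        have h1 := hUB (b j) (b (j+1)) (hb1 j) (hbmono (Nat.le_succ j))
        calc (∫ q in (b j)..(b (j+1)), f q) ≤ ψ 1 ^ m * Real.log (b (j+1) / b j) := h1
          _ = ψ 1 ^ m * (α * Real.log 2) := by
              rw [hbstep j, mul_div_cancel_left₀ _ (ne_of_gt (hb0 j)),
                Real.log_rpow (by norm_num)]
      -- existence of a good exponent
      have hex : ∃ j : ℕ, 1 ≤ j ∧ β ≤ ∫ q in a..(b j), f q := by
        obtain ⟨X, hX1, hXC⟩ := hGrow (β + ∫ q in (1:ℝ)..a, f q)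
        obtain ⟨k, hk⟩ := exists_nat_ge (max X 1 ^ α⁻¹)
        refine ⟨k + 1, Nat.le_add_left 1 k, ?_⟩
        have hXb : X ≤ b (k + 1) := by
          have h2k : (k:ℝ) < 2 ^ (k+1) := by
            calc (k:ℝ) < 2 ^ k := by exact_mod_cast Nat.lt_two_pow_self (n := k)
              _ ≤ 2 ^ (k+1) := by
                  apply pow_le_pow_right₀ (by norm_num) (Nat.le_succ k)
          have hbig : max X 1 ^ α⁻¹ ≤ (P:ℝ) * 2 ^ (k+1) := by
            nlinarith [one_le_pow₀ (show (1:ℝ) ≤ 2 by norm_num) (n := k+1)]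
          have h0 : (0:ℝ) ≤ max X 1 := le_trans zero_le_one (le_max_right X 1)
          have hle := Real.rpow_le_rpow (by positivity) hbig hα.le
          rw [Real.rpow_inv_rpow h0 (ne_of_gt hα)] at hle
          exact le_trans (le_max_left X 1) hle
        have hmono : (∫ q in (1:ℝ)..X, f q) ≤ ∫ q in (1:ℝ)..(b (k+1)), f q := by
          rw [← hAdd 1 X (b (k+1)) one_pos (by linarith) (hb0 _)]
          have := hNN X (b (k+1)) (by linarith) hXb
          linarith
        have hsplit : (∫ q in (1:ℝ)..a, f q) + (∫ q in a..(b (k+1)), f q)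
            = ∫ q in (1:ℝ)..(b (k+1)), f q := hAdd 1 a (b (k+1)) one_pos ha0 (hb0 _)
        linarith
      set j := Nat.find hex with hj_def
      obtain ⟨hj1, hjβ⟩ := Nat.find_spec hex
      refine ⟨j, hj1, fun _ => ⟨hjβ, ?_⟩⟩
      rcases Nat.lt_or_ge j 2 with hj2 | hj2
      · -- j = 1
        have hj1' : j = 1 := le_antisymm (Nat.lt_succ_iff.mp hj2) hj1
        have hb1a : b 1 = a * (2:ℝ) ^ α := by
          rw [hb_def, ha_def]
          simp only [pow_one]
          rw [Real.mul_rpow hP0.le (by norm_num)]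
        have : (∫ q in a..(b j), f q) ≤ ψ 1 ^ m * (α * Real.log 2) := by
          rw [hj1']
          calc (∫ q in a..(b 1), f q) ≤ ψ 1 ^ m * Real.log (b 1 / a) :=
              hUB a (b 1) ha1 (hab 1)
            _ = ψ 1 ^ m * (α * Real.log 2) := by
                rw [hb1a, mul_div_cancel_left₀ _ (ne_of_gt ha0), Real.log_rpow (by norm_num)]
        calc (∫ q in a..(b j), f q) ≤ ψ 1 ^ m * (α * Real.log 2) := this
          _ ≤ β + ψ 1 ^ m * α * Real.log 2 := by nlinarith
      · -- j ≥ 2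
        have hjm1 : j - 1 < j := Nat.sub_lt (by omega) one_pos
        have hmin := Nat.find_min hex hjm1
        push_neg at hmin
        have hlt : (∫ q in a..(b (j-1)), f q) < β := hmin (by omega)
        have hstep := hstepUB (j-1)
        have hsucc : j - 1 + 1 = j := by omega
        rw [hsucc] at hstep
        have := hAdd a (b (j-1)) (b j) ha0 (hb0 _) (hb0 _)
        calc (∫ q in a..(b j), f q)
            = (∫ q in a..(b (j-1)), f q) + ∫ q in (b (j-1))..(b j), f q := this.symm
          _ ≤ β + ψ 1 ^ m * α * Real.log 2 := by
              rw [mul_assoc]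
              exact add_le_add hlt.le hstep
    · exact ⟨1, le_refl 1, fun h => absurd h hP⟩
  -- build the sequence
  choose jf hjf using key
  obtain ⟨Pf, hPf0, hPfS⟩ : ∃ Pf : ℕ → ℕ, Pf 0 = 1 ∧ ∀ k, Pf (k+1) = Pf k * 2 ^ jf (Pf k) :=
    ⟨fun k => Nat.rec 1 (fun _ p => p * 2 ^ jf p) k, rfl, fun k => rfl⟩
  have hPf1 : ∀ k, 1 ≤ Pf k := by
    intro k
    induction k with
    | zero => rw [hPf0]
    | succ k ih =>
        rw [hPfS]
        exact Nat.one_le_iff_ne_zero.2 (Nat.mul_ne_zero (Nat.one_le_iff_ne_zero.1 ih)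
          (Nat.pos_iff_ne_zero.1 (by positivity)))
  refine ⟨fun k => 2 ^ jf (Pf k), fun k => ⟨jf (Pf k), (hjf (Pf k)).1, rfl⟩, ?_⟩
  have hprod : ∀ k, (∏ i ∈ Finset.range k, (((2:ℕ) ^ jf (Pf i) : ℕ) : ℝ)) = (Pf k : ℝ) := by
    intro k
    induction k with
    | zero => simp [hPf0]
    | succ k ih =>
        rw [Finset.prod_range_succ, ih, hPfS]
        push_cast
        ring
  intro k
  have h1 := hprod k
  have h2 := hprod (k + 1)
  have h3 : ((Pf (k+1) : ℕ) : ℝ) = (Pf k : ℝ) * 2 ^ jf (Pf k) := by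
    rw [hPfS]; push_cast; ring
  rw [h1, h2, h3]
  exact (hjf (Pf k)).2 (hPf1 k)
end

section
/- For every q ∈ ℝⁿ \ {0} and every measurable set S ⊂ ℝ^m, the Lebesgue measure (normalized to be a probability measure on the unit cube K = [0,1]^{mn} of m×n matrices) of {A ∈ K : Aq ∈ S} equals ∫_S η(p,q) dp, where η(p,q) is the density at p of the pushforward of Lebesgue measure on [0,1]^{mn} under A ↦ Aq; moreover η satisfies the scaling relation η(γr) = γ^{−m} η(r) for all γ > 0 and r = (p,q) with q ≠ 0. -/
open MeasureTheory

namespace Stmt11Aux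

variable (m n : ℕ)

/-- The linear map `A ↦ A u`. -/
def Lmap (u : Fin n → ℝ) : (Fin m → Fin n → ℝ) →ₗ[ℝ] (Fin m → ℝ) where
  toFun A := fun i => ∑ j, A i j * u j
  map_add' A B := by
    funext i
    simp [add_mul, Finset.sum_add_distrib]
  map_smul' c A := by
    funext i
    simp [Finset.mul_sum, mul_assoc]

lemma Lmap_apply (u : Fin n → ℝ) (A : Fin m → Fin n → ℝ) :
    Lmap m n u A = fun i => ∑ j, A i j * u j := rfl

lemma Lmap_surj {u : Fin n → ℝ} (hu : u ≠ 0) : Function.Surjective (Lmap m n u) := by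
  obtain ⟨j0, hj0⟩ : ∃ j, u j ≠ 0 := by
    by_contra h; push_neg at h; exact hu (funext h)
  intro p
  refine ⟨fun i j => if j = j0 then p i / u j0 else 0, ?_⟩
  funext i
  show (∑ j, (if j = j0 then p i / u j0 else 0) * u j) = p i
  rw [Finset.sum_eq_single j0]
  · simp; field_simp
  · intro b _ hb; simp [hb]
  · simp

lemma Lmap_measurable (u : Fin n → ℝ) : Measurable (Lmap m n u) :=
  (Lmap m n u).continuous_of_finiteDimensional.measurable

/-- The unit cube of matrices. -/
def Kset : Set (Fin m → Fin n → ℝ) := {A | ∀ i j, A i j ∈ Set.Icc (0 : ℝ) 1}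

instance : IsFiniteMeasure (volume.restrict (Kset m n)) := by
  constructor
  rw [Measure.restrict_apply_univ]
  have hK : Kset m n =
      Set.pi Set.univ (fun _ : Fin m => Set.pi Set.univ fun _ : Fin n => Set.Icc (0 : ℝ) 1) := by
    ext A; simp [Kset, Set.mem_pi, Pi.le_def, forall_and]
  rw [hK]
  simp only [volume_pi, Measure.pi_pi, Real.volume_Icc]
  norm_num

/-- The pushforward measure. -/
noncomputable def pushed (u : Fin n → ℝ) : Measure (Fin m → ℝ) :=
  Measure.map (Lmap m n u) (volume.restrict (Kset m n))

instance (u : Fin n → ℝ) : IsFiniteMeasure (pushed m n u) := by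
  constructor
  rw [pushed, Measure.map_apply (Lmap_measurable m n u) MeasurableSet.univ]
  exact measure_lt_top _ _

lemma pushed_ac {u : Fin n → ℝ} (hu : u ≠ 0) : pushed m n u ≪ volume := by
  obtain ⟨c, -, hc⟩ :=
    (Lmap m n u).exists_map_addHaar_eq_smul_addHaar volume volume (Lmap_surj m n hu)
  refine Measure.AbsolutelyContinuous.mk fun S hS h0 => ?_
  have h1 : volume ((Lmap m n u) ⁻¹' S) = 0 := by
    have := Measure.map_apply (Lmap_measurable m n u) hS (μ := (volume : Measure (Fin m → Fin n → ℝ)))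
    rw [hc] at this
    rw [← this, Measure.smul_apply, h0, smul_zero]
  refine nonpos_iff_eq_zero.mp ?_
  calc pushed m n u S = (volume.restrict (Kset m n)) ((Lmap m n u) ⁻¹' S) :=
        Measure.map_apply (Lmap_measurable m n u) hS
    _ ≤ volume ((Lmap m n u) ⁻¹' S) := Measure.restrict_apply_le _ _
    _ = 0 := h1

/-- The density. -/
noncomputable def density (q : Fin n → ℝ) : (Fin m → ℝ) → ENNReal :=
  Measure.rnDeriv (pushed m n (‖q‖⁻¹ • q)) volume

end Stmt11Aux

open Stmt11Aux

/-- The density `η`: for `q ≠ 0`, the normalized Lebesgue measure on the unit cube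
`K = [0,1]^{mn}` of `m×n` matrices of the set `{A ∈ K : Aq ∈ S}` equals `∫_S η(p,q) dp`,
where `η(·,q)` is the density of the pushforward of `λ_K` under `A ↦ Aq`; moreover `η`
satisfies the scaling relation `η(γp, γq) = γ^{-m} η(p,q)` for `γ > 0`. -/
theorem stmt_11 (m n : ℕ) (hm : 1 ≤ m) (hn : 1 ≤ n) :
    ∃ η : (Fin m → ℝ) → (Fin n → ℝ) → ENNReal,
      (∀ q : Fin n → ℝ, q ≠ 0 →
        (Measurable fun p => η p q) ∧
        ∀ S : Set (Fin m → ℝ), MeasurableSet S →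
          (volume.restrict {A : Fin m → Fin n → ℝ | ∀ i j, A i j ∈ Set.Icc (0 : ℝ) 1})
              {A : Fin m → Fin n → ℝ | (fun i => ∑ j, A i j * q j) ∈ S} =
            ∫⁻ p in S, η p q) ∧
      ∀ (γ : ℝ), 0 < γ → ∀ (q : Fin n → ℝ), q ≠ 0 → ∀ p : Fin m → ℝ,
        η (γ • p) (γ • q) = ENNReal.ofReal (γ ^ (-(m : ℤ))) * η p q := by
  refine ⟨fun p q => ENNReal.ofReal (‖q‖ ^ (-(m : ℤ))) * density m n q (‖q‖⁻¹ • p), ?_, ?_⟩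
  · intro q hq
    have hc : (0 : ℝ) < ‖q‖ := norm_pos_iff.2 hq
    set c : ℝ := ‖q‖ with hcdef
    set u : Fin n → ℝ := c⁻¹ • q with hudef
    have hu : u ≠ 0 := smul_ne_zero (inv_ne_zero hc.ne') hq
    set μ : Measure (Fin m → ℝ) := pushed m n u with hμdef
    have hac : μ ≪ volume := pushed_ac m n hu
    have hf : Measurable (Measure.rnDeriv μ volume) := Measure.measurable_rnDeriv μ volume
    have hdens : density m n q = Measure.rnDeriv μ volume := rfl
    constructor
    · exact measurable_const.mul (hf.comp (measurable_const_smul _))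
    intro S hS
    set T : Set (Fin m → ℝ) := (fun x : Fin m → ℝ => c • x) ⁻¹' S with hTdef
    have hT : MeasurableSet T := (measurable_const_smul c) hS
    have hset : {A : Fin m → Fin n → ℝ | (fun i => ∑ j, A i j * q j) ∈ S} =
        (Lmap m n u) ⁻¹' T := by
      ext A
      simp only [Set.mem_setOf_eq, Set.mem_preimage, hTdef]
      have hAq : (fun i => ∑ j, A i j * q j) = c • (Lmap m n u A) := by
        funext i
        rw [Lmap_apply]
        simp only [Pi.smul_apply, smul_eq_mul, Finset.mul_sum]
        refine Finset.sum_congr rfl fun j _ => ?_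
        have hqj : q j = c * u j := by
          rw [hudef]
          simp only [Pi.smul_apply, smul_eq_mul]
          field_simp
        rw [hqj]; ring
      rw [hAq]
    rw [hset, ← Measure.map_apply (Lmap_measurable m n u) hT]
    have hμT : μ T = ∫⁻ x in T, Measure.rnDeriv μ volume x ∂volume :=
      (Measure.setLIntegral_rnDeriv hac T).symm
    -- change of variables
    have hfinrank : Module.finrank ℝ (Fin m → ℝ) = m := Module.finrank_fin_fun ℝ
    have hmap : Measure.map (fun x : Fin m → ℝ => c⁻¹ • x) volume
        = ENNReal.ofReal (c ^ m) • volume := by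
      have := Measure.map_addHaar_smul (volume : Measure (Fin m → ℝ)) (inv_ne_zero hc.ne')
      rw [hfinrank] at this
      rw [this]
      congr 1
      rw [abs_of_pos (by positivity)]
      rw [inv_pow, inv_inv]
    have hcov : ∫⁻ p, T.indicator (Measure.rnDeriv μ volume) (c⁻¹ • p) ∂volume
        = ENNReal.ofReal (c ^ m) * μ T := by
      have hstep := lintegral_map (μ := (volume : Measure (Fin m → ℝ)))
        (hf.indicator hT) (measurable_const_smul c⁻¹)
      rw [hmap, lintegral_smul_measure, lintegral_indicator hT] at hstep
      rw [← hstep, ← hμT]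
      rw [smul_eq_mul]
    have hind : ∀ p : Fin m → ℝ, T.indicator (Measure.rnDeriv μ volume) (c⁻¹ • p)
        = S.indicator (fun p => Measure.rnDeriv μ volume (c⁻¹ • p)) p := by
      intro p
      have hmem : c⁻¹ • p ∈ T ↔ p ∈ S := by
        simp only [hTdef, Set.mem_preimage, smul_inv_smul₀ hc.ne']
      by_cases hp : p ∈ S
      · rw [Set.indicator_of_mem (hmem.2 hp), Set.indicator_of_mem hp]
      · rw [Set.indicator_of_notMem (fun h => hp (hmem.1 h)), Set.indicator_of_notMem hp]
    have hS2 : ∫⁻ p in S, Measure.rnDeriv μ volume (c⁻¹ • p) ∂volume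
        = ENNReal.ofReal (c ^ m) * μ T := by
      rw [← hcov]
      simp only [hind]
      rw [lintegral_indicator hS]
    have hconst : ENNReal.ofReal (c ^ (-(m : ℤ))) * ENNReal.ofReal (c ^ m) = 1 := by
      rw [← ENNReal.ofReal_mul (by positivity)]
      rw [zpow_neg, zpow_natCast]
      rw [inv_mul_cancel₀ (by positivity)]
      exact ENNReal.ofReal_one
    simp only [hdens]
    calc μ T = (ENNReal.ofReal (c ^ (-(m : ℤ))) * ENNReal.ofReal (c ^ m)) * μ T := by
          rw [hconst, one_mul]
      _ = ENNReal.ofReal (c ^ (-(m : ℤ))) * ∫⁻ p in S, Measure.rnDeriv μ volume (c⁻¹ • p) ∂volume := by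
          rw [hS2, mul_assoc]
      _ = ∫⁻ p in S, ENNReal.ofReal (c ^ (-(m : ℤ))) * Measure.rnDeriv μ volume (c⁻¹ • p) ∂volume := by
          exact (lintegral_const_mul _
            ((hf.comp (measurable_const_smul c⁻¹)) :
              Measurable fun p : Fin m → ℝ => μ.rnDeriv volume (c⁻¹ • p))).symm
  · intro γ hγ q hq p
    show ENNReal.ofReal (‖γ • q‖ ^ (-(m : ℤ))) * density m n (γ • q) (‖γ • q‖⁻¹ • (γ • p))
        = ENNReal.ofReal (γ ^ (-(m : ℤ))) *
          (ENNReal.ofReal (‖q‖ ^ (-(m : ℤ))) * density m n q (‖q‖⁻¹ • p))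
    have hc : (0 : ℝ) < ‖q‖ := norm_pos_iff.2 hq
    have hnorm : ‖γ • q‖ = γ * ‖q‖ := by
      rw [norm_smul, Real.norm_eq_abs, abs_of_pos hγ]
    have h1 : ‖γ • q‖⁻¹ • (γ • q) = ‖q‖⁻¹ • q := by
      rw [hnorm, smul_smul]
      congr 1
      field_simp
    have h2 : ‖γ • q‖⁻¹ • (γ • p) = ‖q‖⁻¹ • p := by
      rw [hnorm, smul_smul]
      congr 1
      field_simp
    have h3 : density m n (γ • q) = density m n q := by
      rw [density, density, h1]
    rw [h3, h2, hnorm, mul_zpow, ENNReal.ofReal_mul (by positivity), mul_assoc]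
end

section
/- For all p ∈ ℝ^m, q ∈ ℝⁿ \ {0}, and any nonincreasing ψ, the normalized Lebesgue measure on K = [0,1]^{mn} of the set Δ_ψ(p,q) = {A ∈ K : ‖Aq − p‖ ≤ ψ(‖q‖)} satisfies λ_K(Δ_ψ(p,q)) ≤ C·(ψ(‖q‖)/‖q‖)^m, where C depends only on m, n and the norms. -/
open MeasureTheory

section Aux

variable {k : ℕ} (N : (Fin k → ℝ) → ℝ)

lemma aux_zero (hsmul : ∀ (a : ℝ) x, N (a • x) = |a| * N x) : N 0 = 0 := by
  have := hsmul 0 0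
  simpa using this

lemma aux_nonneg (hsmul : ∀ (a : ℝ) x, N (a • x) = |a| * N x)
    (htri : ∀ x y, N (x + y) ≤ N x + N y) (x : Fin k → ℝ) : 0 ≤ N x := by
  have h0 : N 0 = 0 := aux_zero N hsmul
  have hneg : N (-x) = N x := by
    have := hsmul (-1) x
    simpa using this
  have := htri x (-x)
  rw [add_neg_cancel, h0, hneg] at this
  linarith

lemma aux_sum (hsmul : ∀ (a : ℝ) x, N (a • x) = |a| * N x)
    (htri : ∀ x y, N (x + y) ≤ N x + N y)
    {ι : Type*} (s : Finset ι) (f : ι → (Fin k → ℝ)) :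
    N (∑ i ∈ s, f i) ≤ ∑ i ∈ s, N (f i) := by
  classical
  induction s using Finset.induction_on with
  | empty => simp [aux_zero N hsmul]
  | insert _ _ hx ih =>
    rw [Finset.sum_insert hx, Finset.sum_insert hx]
    exact le_trans (htri _ _) (by linarith)

/-- upper bound by sup norm -/
lemma aux_upper (hsmul : ∀ (a : ℝ) x, N (a • x) = |a| * N x)
    (htri : ∀ x y, N (x + y) ≤ N x + N y) (x : Fin k → ℝ) :
    N x ≤ (∑ i, N (fun j => if i = j then (1:ℝ) else 0)) * ‖x‖ := by
  have hx : x = ∑ i, x i • (fun j => if i = j then (1:ℝ) else 0) := pi_eq_sum_univ x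
  calc N x = N (∑ i, x i • (fun j => if i = j then (1:ℝ) else 0)) := by rw [← hx]
    _ ≤ ∑ i, N (x i • (fun j => if i = j then (1:ℝ) else 0)) := aux_sum N hsmul htri _ _
    _ = ∑ i, |x i| * N (fun j => if i = j then (1:ℝ) else 0) := by
        simp only [hsmul]
    _ ≤ ∑ i, ‖x‖ * N (fun j => if i = j then (1:ℝ) else 0) := by
        apply Finset.sum_le_sum
        intro i _
        exact mul_le_mul_of_nonneg_right (norm_le_pi_norm x i) (aux_nonneg N hsmul htri _)
    _ = (∑ i, N (fun j => if i = j then (1:ℝ) else 0)) * ‖x‖ := by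
        rw [Finset.sum_mul]
        exact Finset.sum_congr rfl fun i _ => mul_comm _ _

/-- lower bound: sup norm ≤ c * N -/
lemma aux_lower (hk : 1 ≤ k)
    (hdef : ∀ x, N x = 0 → x = 0)
    (hsmul : ∀ (a : ℝ) x, N (a • x) = |a| * N x)
    (htri : ∀ x y, N (x + y) ≤ N x + N y) :
    ∃ c : ℝ, 0 < c ∧ ∀ x, ‖x‖ ≤ c * N x := by
  haveI : Nonempty (Fin k) := ⟨⟨0, hk⟩⟩
  set Cμ := (∑ i, N (fun j => if i = j then (1:ℝ) else 0)) with hCμ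
  have hupper : ∀ x, N x ≤ Cμ * ‖x‖ := aux_upper N hsmul htri
  -- N is continuous
  have hCμ0 : 0 ≤ Cμ := Finset.sum_nonneg fun i _ => aux_nonneg N hsmul htri _
  have hcont : Continuous N := by
    rw [Metric.continuous_iff]
    intro x ε hε
    refine ⟨ε / (Cμ + 1), by positivity, fun y hy => ?_⟩
    · skip
      have key : ∀ u v : Fin k → ℝ, N u - N v ≤ Cμ * ‖u - v‖ := by
        intro u v
        have := htri (u - v) v
        rw [sub_add_cancel] at this
        have := hupper (u - v)
        linarith
      have h1 := key y x
      have h2 := key x y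
      rw [← norm_neg (x - y), neg_sub] at h2
      have hd : ‖y - x‖ < ε / (Cμ + 1) := by rwa [dist_eq_norm] at hy
      have hnn : (0:ℝ) ≤ ‖y - x‖ := norm_nonneg _
      have : |N y - N x| ≤ Cμ * ‖y - x‖ := abs_le.mpr ⟨by linarith, by linarith⟩
      rw [Real.dist_eq]
      have hd' : ‖y - x‖ * (Cμ + 1) < ε := by
        rwa [← lt_div_iff₀ (by positivity : (0:ℝ) < Cμ + 1)]
      calc |N y - N x| ≤ Cμ * ‖y - x‖ := this
        _ < ε := by nlinarith
  -- minimum on the sphere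
  have hsph : (Metric.sphere (0 : Fin k → ℝ) 1).Nonempty := by
    refine ⟨(fun _ => (1:ℝ)), ?_⟩
    simp [pi_norm_const]
  obtain ⟨x₀, hx₀S, hmin⟩ := (isCompact_sphere (0 : Fin k → ℝ) 1).exists_isMinOn hsph
    hcont.continuousOn
  have hx₀norm : ‖x₀‖ = 1 := by simpa using hx₀S
  have hx₀ne : x₀ ≠ 0 := by
    intro h; rw [h] at hx₀norm; simp at hx₀norm
  have hc₀ : 0 < N x₀ := by
    rcases (aux_nonneg N hsmul htri x₀).lt_or_eq with h | h
    · exact h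
    · exact absurd (hdef x₀ h.symm) hx₀ne
  refine ⟨(N x₀)⁻¹, inv_pos.mpr hc₀, fun x => ?_⟩
  rcases eq_or_ne x 0 with rfl | hx
  · simp [aux_zero N hsmul]
  · have hxn : (0:ℝ) < ‖x‖ := norm_pos_iff.mpr hx
    set u := ‖x‖⁻¹ • x with hu
    have hus : u ∈ Metric.sphere (0 : Fin k → ℝ) 1 := by
      simp [hu, norm_smul, abs_of_pos (inv_pos.mpr hxn), inv_mul_cancel₀ hxn.ne']
    have h1 : N x₀ ≤ N u := hmin hus
    have h2 : N x = ‖x‖ * N u := by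
      have hxu : x = ‖x‖ • u := by rw [hu, smul_smul, mul_inv_cancel₀ hxn.ne', one_smul]
      nth_rewrite 1 [hxu]
      rw [hsmul, abs_of_pos hxn]
    rw [inv_mul_eq_div, le_div_iff₀ hc₀]
    nlinarith

end Aux
/-- Crude measure bound (5.13): given norms `Nμ`, `Nν` on `ℝ^m`, `ℝⁿ`, there is `C > 0`
(depending only on `m`, `n` and the norms) such that for every positive nonincreasing `ψ`
and all `p`, `q ≠ 0`, the normalized Lebesgue measure on `K = [0,1]^{mn}` of
`Δ_ψ(p,q) = {A ∈ K : Nμ(Aq − p) ≤ ψ(Nν q)}` is at most `C·(ψ(Nν q)/Nν q)^m`. -/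
theorem stmt_12 (m n : ℕ) (hm : 1 ≤ m) (hn : 1 ≤ n)
    (Nμ : (Fin m → ℝ) → ℝ)
    (hNμdef : ∀ x, Nμ x = 0 → x = 0)
    (hNμsmul : ∀ (a : ℝ) x, Nμ (a • x) = |a| * Nμ x)
    (hNμtri : ∀ x y, Nμ (x + y) ≤ Nμ x + Nμ y)
    (Nν : (Fin n → ℝ) → ℝ)
    (hNνdef : ∀ x, Nν x = 0 → x = 0)
    (hNνsmul : ∀ (a : ℝ) x, Nν (a • x) = |a| * Nν x)
    (hNνtri : ∀ x y, Nν (x + y) ≤ Nν x + Nν y) :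
    ∃ C : ℝ, 0 < C ∧
      ∀ ψ : ℝ → ℝ, Antitone ψ → (∀ t, 0 < ψ t) →
      ∀ (p : Fin m → ℝ) (q : Fin n → ℝ), q ≠ 0 →
        (volume.restrict {A : Fin m → Fin n → ℝ | ∀ i j, A i j ∈ Set.Icc (0 : ℝ) 1})
            {A : Fin m → Fin n → ℝ | Nμ ((fun i => ∑ j, A i j * q j) - p) ≤ ψ (Nν q)} ≤
          ENNReal.ofReal (C * (ψ (Nν q) / Nν q) ^ m) := by
  classical
  haveI : Nonempty (Fin n) := ⟨⟨0, hn⟩⟩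
  obtain ⟨c, hc, hclow⟩ := aux_lower Nμ hm hNμdef hNμsmul hNμtri
  set Cν := ∑ j : Fin n, Nν (fun l => if j = l then (1:ℝ) else 0) with hCνdef
  have hCν : 0 < Cν := by
    apply Finset.sum_pos
    · intro j _
      rcases (aux_nonneg Nν hNνsmul hNνtri (fun l => if j = l then (1:ℝ) else 0)).lt_or_eq
        with h | h
      · exact h
      · exfalso
        have := hNνdef _ h.symm
        have := congrFun this j
        simp at this
    · exact ⟨⟨0, hn⟩, Finset.mem_univ _⟩
  refine ⟨(2 * c * Cν) ^ m, pow_pos (by positivity) m, ?_⟩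
  intro ψ hψanti hψpos p q hq
  set δ := ψ (Nν q) with hδdef
  have hδ : 0 < δ := hψpos _
  have hr : 0 < Nν q := by
    rcases (aux_nonneg Nν hNνsmul hNνtri q).lt_or_eq with h | h
    · exact h
    · exact absurd (hNνdef q h.symm) hq
  -- coordinate with largest |q j|
  obtain ⟨j₀, -, hj₀⟩ := Finset.exists_max_image Finset.univ (fun j => |q j|)
    ⟨⟨0, hn⟩, Finset.mem_univ _⟩
  have hqj₀ : 0 < |q j₀| := by
    obtain ⟨j, hj⟩ := Function.ne_iff.mp hq
    exact lt_of_lt_of_le (abs_pos.mpr hj) (hj₀ j (Finset.mem_univ _))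
  have hrle : Nν q ≤ Cν * |q j₀| := by
    have h1 : Nν q ≤ Cν * ‖q‖ := aux_upper Nν hNνsmul hNνtri q
    have h2 : ‖q‖ ≤ |q j₀| := by
      rw [pi_norm_le_iff_of_nonneg (abs_nonneg _)]
      intro j
      simpa [Real.norm_eq_abs] using hj₀ j (Finset.mem_univ _)
    calc Nν q ≤ Cν * ‖q‖ := h1
      _ ≤ Cν * |q j₀| := by nlinarith
  -- the linear map
  set M : Matrix (Fin n) (Fin n) ℝ := Matrix.updateRow 1 j₀ q with hMdef
  set φ : (Fin n → ℝ) →ₗ[ℝ] (Fin n → ℝ) := Matrix.toLin' M with hφdef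
  have hMdet : M.det = q j₀ := by
    have h : (∑ k, q k • (1 : Matrix (Fin n) (Fin n) ℝ) k) = q := by
      funext l
      simp [Matrix.one_apply, Pi.smul_apply, Finset.sum_ite_eq, mul_ite]
    have := Matrix.det_updateRow_sum (1 : Matrix (Fin n) (Fin n) ℝ) j₀ q
    rw [h] at this
    simpa [hMdef] using this
  have hdet : LinearMap.det φ = q j₀ := by
    rw [hφdef, LinearMap.det_toLin', hMdet]
  have hdetne : LinearMap.det φ ≠ 0 := by
    rw [hdet]; exact fun h => by simp [h] at hqj₀
  -- boxes and preimages
  set Box : Fin m → Set (Fin n → ℝ) := fun i =>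
    Set.pi Set.univ (fun j => if j = j₀ then Set.Icc (p i - c * δ) (p i + c * δ)
      else Set.Icc (0:ℝ) 1) with hBoxdef
  set T : Fin m → Set (Fin n → ℝ) := fun i => φ ⁻¹' (Box i) with hTdef
  set K : Set (Fin m → Fin n → ℝ) := {A | ∀ i j, A i j ∈ Set.Icc (0 : ℝ) 1} with hKdef
  set S : Set (Fin m → Fin n → ℝ) :=
    {A | Nμ ((fun i => ∑ j, A i j * q j) - p) ≤ δ} with hSdef
  have hKmeas : MeasurableSet K := by
    have : K = Set.pi Set.univ (fun i : Fin m =>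
        Set.pi Set.univ (fun _j : Fin n => Set.Icc (0:ℝ) 1)) := by
      ext A
      constructor
      · intro h i _ j _
        exact h i j
      · intro h i j
        exact h i (Set.mem_univ i) j (Set.mem_univ j)
    rw [this]
    exact MeasurableSet.pi (Set.countable_univ)
      (fun i _ => MeasurableSet.pi (Set.countable_univ) (fun j _ => measurableSet_Icc))
  rw [Measure.restrict_apply' hKmeas]
  -- inclusion
  have hsub : S ∩ K ⊆ Set.pi Set.univ T := by
    rintro A ⟨hAS, hAK⟩ i -
    show φ (A i) ∈ Box i
    have hmul : ∀ j, φ (A i) j = ∑ l, M j l * A i l := by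
      intro j
      rw [hφdef, Matrix.toLin'_apply]
      rfl
    simp only [hBoxdef, Set.mem_pi, Set.mem_univ, true_implies]
    intro j
    by_cases hj : j = j₀
    · subst hj
      simp only [if_pos rfl]
      have hvi : |(∑ l, A i l * q l) - p i| ≤ c * δ := by
        have h1 : Nμ ((fun i => ∑ j, A i j * q j) - p) ≤ δ := hAS
        have h2 := hclow ((fun i => ∑ j, A i j * q j) - p)
        have h3 := norm_le_pi_norm ((fun i => ∑ j, A i j * q j) - p) i
        have h4 : ((fun i => ∑ j, A i j * q j) - p) i = (∑ l, A i l * q l) - p i := by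
          simp
        rw [h4, Real.norm_eq_abs] at h3
        nlinarith [aux_nonneg Nμ hNμsmul hNμtri ((fun i => ∑ j, A i j * q j) - p)]
      have hval : φ (A i) j = ∑ l, A i l * q l := by
        rw [hmul]
        apply Finset.sum_congr rfl
        intro l _
        rw [hMdef, Matrix.updateRow_self, mul_comm]
      rw [hval]
      rcases abs_le.mp hvi with ⟨h1, h2⟩
      constructor <;> linarith
    · simp only [if_neg hj]
      have hval : φ (A i) j = A i j := by
        rw [hmul]
        simp [hMdef, Matrix.updateRow_ne hj, Matrix.one_apply, ite_mul, Finset.sum_ite_eq]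
      rw [hval]
      exact hAK i j
  refine le_trans (measure_mono hsub) ?_
  -- compute product measure
  have hBoxvol : ∀ i, volume (Box i) = ENNReal.ofReal (2 * (c * δ)) := by
    intro i
    rw [hBoxdef]
    rw [volume_pi_pi]
    have : ∀ j : Fin n, volume (if j = j₀ then Set.Icc (p i - c * δ) (p i + c * δ)
        else Set.Icc (0:ℝ) 1) =
        (if j = j₀ then ENNReal.ofReal (2 * (c * δ)) else 1) := by
      intro j
      by_cases hj : j = j₀
      · subst hj
        rw [if_pos rfl, if_pos rfl, Real.volume_Icc]
        congr 1
        ring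
      · rw [if_neg hj, if_neg hj, Real.volume_Icc]
        norm_num
    rw [Finset.prod_congr rfl (fun j _ => this j)]
    rw [Finset.prod_ite_eq']
    simp
  have hTvol : ∀ i, volume (T i) =
      ENNReal.ofReal |(q j₀)⁻¹| * ENNReal.ofReal (2 * (c * δ)) := by
    intro i
    rw [hTdef]
    rw [Measure.addHaar_preimage_linearMap volume hdetne (Box i), hdet, hBoxvol i]
  have hprod : volume (Set.pi Set.univ T) =
      (ENNReal.ofReal |(q j₀)⁻¹| * ENNReal.ofReal (2 * (c * δ))) ^ m := by
    rw [volume_pi_pi]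
    rw [Finset.prod_congr rfl (fun i _ => hTvol i)]
    simp [Finset.prod_const]
  rw [hprod]
  -- final real estimate
  have hbase : ENNReal.ofReal |(q j₀)⁻¹| * ENNReal.ofReal (2 * (c * δ)) =
      ENNReal.ofReal (|q j₀|⁻¹ * (2 * (c * δ))) := by
    rw [← ENNReal.ofReal_mul (by positivity), abs_inv]
  rw [hbase, ← ENNReal.ofReal_pow (by positivity)]
  apply ENNReal.ofReal_le_ofReal
  have hkey : |q j₀|⁻¹ * (2 * (c * δ)) ≤ 2 * c * Cν * (δ / Nν q) := by
    have key' : |q j₀|⁻¹ ≤ Cν / Nν q := by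
      rw [inv_eq_one_div, div_le_div_iff₀ hqj₀ hr]
      linarith
    have h1 : |q j₀|⁻¹ * (2 * (c * δ)) ≤ (Cν / Nν q) * (2 * (c * δ)) :=
      mul_le_mul_of_nonneg_right key' (by positivity)
    have h2 : (Cν / Nν q) * (2 * (c * δ)) = 2 * c * Cν * (δ / Nν q) := by
      field_simp
    linarith [h1, h2.ge, h2.le]
  calc (|q j₀|⁻¹ * (2 * (c * δ))) ^ m ≤ (2 * c * Cν * (δ / Nν q)) ^ m := by
        apply pow_le_pow_left₀ (by positivity) hkey
    _ = (2 * c * Cν) ^ m * (δ / Nν q) ^ m := by rw [mul_pow]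
end

section
/- With the same Cantor-series setup: for any tree T* in E*, and any dimension function f, H^f(π(T^∞)) ≤ liminf_{ρ→0} N_ρ(π(T^∞))·f(ρ) ≤ C·liminf_{ρ→0} f(ρ)/f_−(ρ), where f_−(ρ) = (Π_{j=1}^{k(ρ)} 1/(1−P_j^−))·ρ^D, P_k^− = min_{ω ∈ T^{k−1}} #(E_k \ T_ω)/(N_k)^D is the lower evaporation rate, and C depends only on D and the norm. -/
open MeasureTheory Filter

/-- Hausdorff `f`-measure, defined via countable covers by closed balls of positive
radius at most `ε`, with cost `∑ f(ρ_i)`, letting `ε → 0`. -/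
noncomputable def hausdorffF {X : Type*} [MetricSpace X] (f : ℝ → ℝ) (S : Set X) : ENNReal :=
  ⨆ (ε : ℝ) (_ : 0 < ε),
    ⨅ (c : ℕ → X × ℝ)
      (_ : (∀ i, 0 < (c i).2 ∧ (c i).2 ≤ ε) ∧ S ⊆ ⋃ i, Metric.closedBall (c i).1 (c i).2),
      ∑' i, ENNReal.ofReal (f (c i).2)

/-- `N_ρ(S)`: the minimal number of closed balls of radius `ρ` needed to cover `S`. -/
noncomputable def coverCount {X : Type*} [MetricSpace X] (ρ : ℝ) (S : Set X) : ENNReal :=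
  ⨅ (F : Finset X) (_ : S ⊆ ⋃ x ∈ F, Metric.closedBall x ρ), (F.card : ENNReal)

/-- A string of digits is valid if its `j`-th digit has entries `< N j`. -/
def validStr (D : ℕ) (N : ℕ → ℕ) (ω : List (Fin D → ℕ)) : Prop :=
  ∀ (j : ℕ) (h : j < ω.length) (i : Fin D), ω.get ⟨j, h⟩ i < N j

/-- A tree in `E^*`: a set of valid strings closed under taking initial segments. -/
def IsTree (D : ℕ) (N : ℕ → ℕ) (T : Set (List (Fin D → ℕ))) : Prop :=
  (∀ ω ∈ T, validStr D N ω) ∧ ∀ ω ∈ T, ω.dropLast ∈ T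

/-- `N^k = N₁ ⋯ N_k`. -/
def Npow (N : ℕ → ℕ) (k : ℕ) : ℕ := ∏ i ∈ Finset.range k, N i

/-- The lower evaporation rate `P_k^-`: the minimal proportion of children removed from
the tree at a node of length `k`. -/
noncomputable def Pminus (D : ℕ) (N : ℕ → ℕ) (T : Set (List (Fin D → ℕ))) (k : ℕ) : ℝ :=
  sInf {x : ℝ | ∃ ω ∈ T, ω.length = k ∧
    x = (({a : Fin D → ℕ | (∀ i, a i < N k) ∧ ω ++ [a] ∉ T}.ncard : ℝ)) / (N k : ℝ) ^ D}

/-- `k(ρ)`: the unique `k` with `1/N^{k+1} < ρ ≤ 1/N^k`. -/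
noncomputable def kIdx (N : ℕ → ℕ) (ρ : ℝ) : ℕ := sSup {k : ℕ | ρ ≤ ((Npow N k : ℝ))⁻¹}

/-- `f_-(ρ) = (∏_{j=1}^{k(ρ)} (1 - P_j^-)⁻¹) ρ^D`. -/
noncomputable def fminus (D : ℕ) (N : ℕ → ℕ) (T : Set (List (Fin D → ℕ))) (ρ : ℝ) : ℝ :=
  (∏ j ∈ Finset.range (kIdx N ρ), (1 - Pminus D N T j)⁻¹) * ρ ^ D

/-- The set of infinite branches through the tree. -/
def branches (D : ℕ) (T : Set (List (Fin D → ℕ))) : Set (ℕ → Fin D → ℕ) :=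
  {σ | ∀ k : ℕ, (List.ofFn fun j : Fin k => σ j) ∈ T}

/-- The coding map `π(ω) = ∑_k ω_k/N^k ∈ [0,1]^D` on infinite branches. -/
noncomputable def codingMap (D : ℕ) (N : ℕ → ℕ) (σ : ℕ → Fin D → ℕ) : Fin D → ℝ :=
  fun i => ∑' j : ℕ, (σ j i : ℝ) / (Npow N (j + 1) : ℝ)

section Helpers

variable {D : ℕ} {N : ℕ → ℕ} {T : Set (List (Fin D → ℕ))}

lemma Npow_succ (N : ℕ → ℕ) (k : ℕ) : Npow N (k+1) = Npow N k * N k :=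
  Finset.prod_range_succ N k

lemma Npow_pos (hN : ∀ k, 2 ≤ N k) (k : ℕ) : 0 < Npow N k :=
  Finset.prod_pos fun i _ => lt_of_lt_of_le two_pos (hN i)

lemma two_pow_le_Npow (hN : ∀ k, 2 ≤ N k) (k : ℕ) : 2^k ≤ Npow N k := by
  induction k with
  | zero => simp [Npow]
  | succ k ih =>
    rw [Npow_succ, pow_succ]
    exact Nat.mul_le_mul ih (hN k)

lemma kIdx_mem (hN : ∀ k, 2 ≤ N k) {ρ : ℝ} (hρ0 : 0 < ρ) (hρ1 : ρ ≤ 1) :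
    ρ ≤ ((Npow N (kIdx N ρ) : ℝ))⁻¹ ∧ ((Npow N (kIdx N ρ + 1) : ℝ))⁻¹ < ρ := by
  set s : Set ℕ := {k : ℕ | ρ ≤ ((Npow N k : ℝ))⁻¹} with hs
  have h0 : 0 ∈ s := by simp [hs, Npow, hρ1]
  obtain ⟨n, hn⟩ := pow_unbounded_of_one_lt (1/ρ) (one_lt_two (α := ℝ))
  have hbdd : BddAbove s := by
    refine ⟨n, fun k hk => ?_⟩
    by_contra hkn
    push_neg at hkn
    have hx : (0:ℝ) < (Npow N k : ℝ) := by exact_mod_cast Npow_pos hN k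
    have h2k : (2:ℝ)^k ≤ (Npow N k : ℝ) := by exact_mod_cast two_pow_le_Npow hN k
    have hk1 : ρ * (Npow N k : ℝ) ≤ 1 := by
      have := hk
      rw [hs, Set.mem_setOf_eq, inv_eq_one_div, le_div_iff₀ hx] at this
      exact this
    have hk2 : (Npow N k : ℝ) ≤ 1/ρ := by
      rw [le_div_iff₀ hρ0]
      linarith [hk1, mul_comm ρ (Npow N k : ℝ)]
    have hmono : (2:ℝ)^n ≤ 2^k := pow_le_pow_right₀ one_le_two hkn.le
    linarith
  constructor
  · exact Nat.sSup_mem ⟨0, h0⟩ hbdd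
  · by_contra h
    push_neg at h
    have : kIdx N ρ + 1 ∈ s := h
    have h2 := le_csSup hbdd this
    have h3 : sSup s = kIdx N ρ := rfl
    omega

end Helpers
open Classical in
noncomputable def Efin (D : ℕ) (N : ℕ → ℕ) (k : ℕ) : Finset (Fin D → ℕ) :=
  Fintype.piFinset fun _ : Fin D => Finset.range (N k)

lemma mem_Efin {D : ℕ} {N : ℕ → ℕ} {k : ℕ} {a : Fin D → ℕ} :
    a ∈ Efin D N k ↔ ∀ i, a i < N k := by
  simp [Efin]

lemma card_Efin (D : ℕ) (N : ℕ → ℕ) (k : ℕ) : (Efin D N k).card = (N k)^D := by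
  simp [Efin, Fintype.card_piFinset]

open Classical in
noncomputable def removedF (D : ℕ) (N : ℕ → ℕ) (T : Set (List (Fin D → ℕ))) (k : ℕ)
    (ω : List (Fin D → ℕ)) : Finset (Fin D → ℕ) :=
  (Efin D N k).filter fun a => ω ++ [a] ∉ T

open Classical in
noncomputable def childrenF (D : ℕ) (N : ℕ → ℕ) (T : Set (List (Fin D → ℕ))) (k : ℕ)
    (ω : List (Fin D → ℕ)) : Finset (Fin D → ℕ) :=
  (Efin D N k).filter fun a => ω ++ [a] ∈ T

lemma coe_removedF (D : ℕ) (N : ℕ → ℕ) (T : Set (List (Fin D → ℕ))) (k : ℕ)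
    (ω : List (Fin D → ℕ)) :
    (removedF D N T k ω : Set (Fin D → ℕ)) = {a : Fin D → ℕ | (∀ i, a i < N k) ∧ ω ++ [a] ∉ T} := by
  ext a; simp [removedF, mem_Efin]

lemma Pminus_nonneg (D : ℕ) (N : ℕ → ℕ) (T : Set (List (Fin D → ℕ))) (k : ℕ) :
    0 ≤ Pminus D N T k := by
  apply Real.sInf_nonneg
  rintro x ⟨ω, hω, hlen, rfl⟩
  positivity

lemma Pminus_le (D : ℕ) (N : ℕ → ℕ) (T : Set (List (Fin D → ℕ))) {k : ℕ}
    {ω : List (Fin D → ℕ)} (hω : ω ∈ T) (hlen : ω.length = k) :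
    Pminus D N T k ≤ ((removedF D N T k ω).card : ℝ) / (N k : ℝ)^D := by
  refine csInf_le ⟨0, ?_⟩ ⟨ω, hω, hlen, by rw [← coe_removedF, Set.ncard_coe_finset]⟩
  rintro x ⟨ω', hω', hlen', rfl⟩; positivity

lemma Pminus_le_one (D : ℕ) (N : ℕ → ℕ) (T : Set (List (Fin D → ℕ))) (k : ℕ)
    (hN : ∀ k, 2 ≤ N k) : Pminus D N T k ≤ 1 := by
  unfold Pminus
  rcases Set.eq_empty_or_nonempty {x : ℝ | ∃ ω ∈ T, ω.length = k ∧
      x = (({a : Fin D → ℕ | (∀ i, a i < N k) ∧ ω ++ [a] ∉ T}.ncard : ℝ)) / (N k : ℝ) ^ D} with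
    h | ⟨x, ω, hω, hlen, hx⟩
  · rw [h, Real.sInf_empty]; norm_num
  · have hle : x ≤ 1 := by
      rw [hx, ← coe_removedF, Set.ncard_coe_finset]
      rw [div_le_one (by have := hN k; positivity)]
      calc ((removedF D N T k ω).card : ℝ) ≤ ((Efin D N k).card : ℝ) := by
            refine Nat.cast_le.2 (Finset.card_le_card fun a ha => ?_)
            have : a ∈ (removedF D N T k ω : Set (Fin D → ℕ)) := ha
            rw [coe_removedF] at this
            exact mem_Efin.2 this.1
        _ = (N k : ℝ)^D := by rw [card_Efin]; push_cast; ring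
    refine le_trans (csInf_le ⟨0, ?_⟩ ⟨ω, hω, hlen, hx⟩) hle
    rintro y ⟨ω', hω', hlen', rfl⟩; positivity

open Classical in
noncomputable def TkF (D : ℕ) (N : ℕ → ℕ) (T : Set (List (Fin D → ℕ))) :
    ℕ → Finset (List (Fin D → ℕ))
  | 0 => if [] ∈ T then {[]} else ∅
  | (k+1) => ((TkF D N T k ×ˢ Efin D N k).image fun p => p.1 ++ [p.2]).filter fun ω => ω ∈ T

lemma mem_TkF {D : ℕ} {N : ℕ → ℕ} {T : Set (List (Fin D → ℕ))} (hT : IsTree D N T) (k : ℕ)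
    {ω : List (Fin D → ℕ)} : ω ∈ TkF D N T k ↔ ω ∈ T ∧ ω.length = k := by
  induction k generalizing ω with
  | zero =>
    simp only [TkF]
    split_ifs with h
    · simp only [Finset.mem_singleton, List.length_eq_zero_iff]
      constructor
      · rintro rfl; exact ⟨h, rfl⟩
      · rintro ⟨_, rfl⟩; rfl
    · simp only [Finset.notMem_empty, false_iff, not_and, List.length_eq_zero_iff]
      rintro hω rfl; exact h hω
  | succ k ih =>
    simp only [TkF, Finset.mem_filter, Finset.mem_image, Finset.mem_product]
    constructor
    · rintro ⟨⟨⟨ω', a⟩, ⟨hω', _⟩, rfl⟩, hmem⟩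
      refine ⟨hmem, ?_⟩
      simp [List.length_append, (ih.1 hω').2]
    · rintro ⟨hω, hlen⟩
      have hne : ω ≠ [] := by rintro rfl; simp at hlen
      have hdrop : ω.dropLast ∈ T := hT.2 ω hω
      have hdlen : ω.dropLast.length = k := by
        rw [List.length_dropLast, hlen]; omega
      have hlast : ω.getLast hne ∈ Efin D N k := by
        rw [mem_Efin]
        intro i
        have hv := hT.1 ω hω
        have hk : k < ω.length := by omega
        have : ω.getLast hne = ω.get ⟨k, hk⟩ := by
          rw [List.getLast_eq_getElem]
          congr 1
          simp [hlen]
        rw [this]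
        exact hv k hk i
      refine ⟨⟨⟨ω.dropLast, ω.getLast hne⟩, ⟨ih.2 ⟨hdrop, hdlen⟩, hlast⟩, ?_⟩, hω⟩
      simp [List.dropLast_append_getLast]

lemma children_card_le {D : ℕ} {N : ℕ → ℕ} {T : Set (List (Fin D → ℕ))} (hN : ∀ k, 2 ≤ N k)
    {k : ℕ} {ω : List (Fin D → ℕ)} (hω : ω ∈ T) (hlen : ω.length = k) :
    ((childrenF D N T k ω).card : ℝ) ≤ (N k : ℝ)^D * (1 - Pminus D N T k) := by
  classical
  have hsplit : (childrenF D N T k ω).card + (removedF D N T k ω).card = (N k)^D := by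
    rw [← card_Efin D N k]
    exact Finset.card_filter_add_card_filter_not _
  have hpos : (0:ℝ) < (N k : ℝ)^D := by have := hN k; positivity
  have hP := Pminus_le D N T hω hlen
  rw [le_div_iff₀ hpos] at hP
  have : ((childrenF D N T k ω).card : ℝ) + ((removedF D N T k ω).card : ℝ) = (N k : ℝ)^D := by
    exact_mod_cast congrArg (Nat.cast (R := ℝ)) hsplit
  nlinarith [hP, this]

lemma card_TkF_le {D : ℕ} {N : ℕ → ℕ} {T : Set (List (Fin D → ℕ))} (hN : ∀ k, 2 ≤ N k)
    (hT : IsTree D N T) (k : ℕ) :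
    ((TkF D N T k).card : ℝ) ≤ ∏ j ∈ Finset.range k, ((N j : ℝ)^D * (1 - Pminus D N T j)) := by
  classical
  induction k with
  | zero =>
    simp only [Finset.range_zero, Finset.prod_empty, TkF]
    split_ifs <;> simp
  | succ k ih =>
    have hsub : TkF D N T (k+1) ⊆
        (TkF D N T k).biUnion (fun ω => (childrenF D N T k ω).image (fun a => ω ++ [a])) := by
      intro ω' hω'
      simp only [TkF, Finset.mem_filter, Finset.mem_image, Finset.mem_product] at hω'
      obtain ⟨⟨⟨ω, a⟩, ⟨hω, ha⟩, rfl⟩, hmem⟩ := hω'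
      apply Finset.mem_biUnion.2
      exact ⟨ω, hω, Finset.mem_image.2 ⟨a, Finset.mem_filter.2 ⟨ha, hmem⟩, rfl⟩⟩
    have h1 : (TkF D N T (k+1)).card ≤
        ∑ ω ∈ TkF D N T k, (childrenF D N T k ω).card := by
      refine le_trans (Finset.card_le_card hsub) (le_trans (Finset.card_biUnion_le) ?_)
      exact Finset.sum_le_sum fun ω _ => Finset.card_image_le
    have h2 : ((TkF D N T (k+1)).card : ℝ) ≤
        ∑ ω ∈ TkF D N T k, ((N k : ℝ)^D * (1 - Pminus D N T k)) := by
      calc ((TkF D N T (k+1)).card : ℝ) ≤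
          ∑ ω ∈ TkF D N T k, ((childrenF D N T k ω).card : ℝ) := by exact_mod_cast h1
        _ ≤ _ := by
            refine Finset.sum_le_sum fun ω hω => ?_
            have hm := (mem_TkF hT k).1 hω
            exact children_card_le hN hm.1 hm.2
    rw [Finset.sum_const, nsmul_eq_mul] at h2
    rw [Finset.prod_range_succ]
    have hfac : (0:ℝ) ≤ (N k : ℝ)^D * (1 - Pminus D N T k) := by
      have h1 := Pminus_le_one D N T k hN
      have : (0:ℝ) ≤ (N k : ℝ)^D := by positivity
      nlinarith
    calc ((TkF D N T (k+1)).card : ℝ) ≤ ((TkF D N T k).card : ℝ) * ((N k : ℝ)^D * (1 - Pminus D N T k)) := h2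
      _ ≤ _ := mul_le_mul_of_nonneg_right ih hfac
lemma branch_digit_lt {D : ℕ} {N : ℕ → ℕ} {T : Set (List (Fin D → ℕ))} (hT : IsTree D N T)
    {σ : ℕ → Fin D → ℕ} (hσ : σ ∈ branches D T) (j : ℕ) (i : Fin D) : σ j i < N j := by
  have h := hT.1 _ (hσ (j+1))
  have hl : j < (List.ofFn fun t : Fin (j+1) => σ t).length := by simp
  simpa [List.get_ofFn] using h j hl i

lemma npow_inv_le_geom {N : ℕ → ℕ} (hN : ∀ k, 2 ≤ N k) (j : ℕ) :
    ((Npow N j : ℝ))⁻¹ ≤ (1/2)^j := by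
  have h2 : (2:ℝ)^j ≤ (Npow N j : ℝ) := by exact_mod_cast two_pow_le_Npow hN j
  have hp : (0:ℝ) < 2^j := by positivity
  rw [one_div, inv_pow]
  exact inv_anti₀ hp h2

lemma key_id {N : ℕ → ℕ} (hN : ∀ k, 2 ≤ N k) (j : ℕ) :
    ((N j : ℝ) - 1)/(Npow N (j+1) : ℝ) = ((Npow N j : ℝ))⁻¹ - ((Npow N (j+1) : ℝ))⁻¹ := by
  have h1 : (Npow N (j+1) : ℝ) = (Npow N j : ℝ) * (N j : ℝ) := by
    exact_mod_cast Npow_succ N j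
  have h2 : (0:ℝ) < (Npow N j : ℝ) := by exact_mod_cast Npow_pos hN j
  have h3 : (0:ℝ) < (N j : ℝ) := by have := hN j; positivity
  rw [h1]; field_simp
  try ring

lemma term_le {D : ℕ} {N : ℕ → ℕ} (hN : ∀ k, 2 ≤ N k) {σ : ℕ → Fin D → ℕ}
    (hdig : ∀ j i, σ j i < N j) (j : ℕ) (i : Fin D) :
    (σ j i : ℝ)/(Npow N (j+1) : ℝ) ≤ ((Npow N j : ℝ))⁻¹ - ((Npow N (j+1) : ℝ))⁻¹ := by
  rw [← key_id hN]
  have hnum : (σ j i : ℝ) + 1 ≤ (N j : ℝ) := by exact_mod_cast hdig j i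
  have hden : (0:ℝ) < (Npow N (j+1) : ℝ) := by exact_mod_cast Npow_pos hN (j+1)
  gcongr
  linarith

lemma summable_coding {D : ℕ} {N : ℕ → ℕ} (hN : ∀ k, 2 ≤ N k) {σ : ℕ → Fin D → ℕ}
    (hdig : ∀ j i, σ j i < N j) (i : Fin D) :
    Summable fun j => (σ j i : ℝ)/(Npow N (j+1) : ℝ) := by
  refine Summable.of_nonneg_of_le (fun j => by positivity) (fun j => ?_) summable_geometric_two
  · have h1 : (σ j i : ℝ)/(Npow N (j+1) : ℝ) ≤ ((Npow N j : ℝ))⁻¹ := by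
      have := term_le hN hdig j i
      have h2 : (0:ℝ) ≤ ((Npow N (j+1) : ℝ))⁻¹ := by positivity
      linarith
    exact h1.trans (npow_inv_le_geom hN j)
lemma partial_tail_le {D : ℕ} {N : ℕ → ℕ} (hN : ∀ k, 2 ≤ N k) {σ : ℕ → Fin D → ℕ}
    (hdig : ∀ j i, σ j i < N j) (i : Fin D) (k n : ℕ) :
    ∑ j ∈ Finset.range n, (σ (j + k) i : ℝ)/(Npow N (j + k + 1) : ℝ) ≤
      ((Npow N k : ℝ))⁻¹ - ((Npow N (k + n) : ℝ))⁻¹ := by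
  induction n with
  | zero => simp
  | succ n ih =>
    rw [Finset.sum_range_succ]
    have ht := term_le hN hdig (n + k) i
    rw [show k + n = n + k from add_comm k n] at ih
    rw [show k + (n+1) = n + k + 1 by omega]
    linarith

lemma coding_tail_bound {D : ℕ} {N : ℕ → ℕ} (hN : ∀ k, 2 ≤ N k) {σ : ℕ → Fin D → ℕ}
    (hdig : ∀ j i, σ j i < N j) (i : Fin D) (k : ℕ) :
    0 ≤ codingMap D N σ i - ∑ j ∈ Finset.range k, (σ j i : ℝ)/(Npow N (j+1) : ℝ) ∧
    codingMap D N σ i - ∑ j ∈ Finset.range k, (σ j i : ℝ)/(Npow N (j+1) : ℝ) ≤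
      ((Npow N k : ℝ))⁻¹ := by
  have hsum := summable_coding hN hdig i
  have hsplit := Summable.sum_add_tsum_nat_add k hsum
  have htail : codingMap D N σ i - ∑ j ∈ Finset.range k, (σ j i : ℝ)/(Npow N (j+1) : ℝ) =
      ∑' j : ℕ, (σ (j + k) i : ℝ)/(Npow N (j + k + 1) : ℝ) := by
    rw [codingMap]
    linarith [hsplit]
  rw [htail]
  constructor
  · exact tsum_nonneg fun j => by positivity
  · apply Real.tsum_le_of_sum_range_le (fun n => by positivity)
    intro n
    have := partial_tail_le hN hdig i k n
    have hge : (0:ℝ) ≤ ((Npow N (k + n) : ℝ))⁻¹ := by positivity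
    linarith
lemma coverCount_empty {X : Type*} [MetricSpace X] (ρ : ℝ) : coverCount ρ (∅ : Set X) = 0 := by
  refine le_antisymm ?_ zero_le
  refine le_trans (iInf_le _ (∅ : Finset X)) ?_
  refine le_trans (iInf_le _ (by simp)) ?_
  simp

lemma prod_one_sub_Pminus_nonneg (D : ℕ) (N : ℕ → ℕ) (T : Set (List (Fin D → ℕ)))
    (hN : ∀ k, 2 ≤ N k) (k : ℕ) :
    0 ≤ ∏ j ∈ Finset.range k, (1 - Pminus D N T j) :=
  Finset.prod_nonneg fun j _ => by linarith [Pminus_le_one D N T j hN]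

lemma fminus_inv (D : ℕ) (N : ℕ → ℕ) (T : Set (List (Fin D → ℕ))) (ρ : ℝ) :
    (fminus D N T ρ)⁻¹ = (∏ j ∈ Finset.range (kIdx N ρ), (1 - Pminus D N T j)) * (ρ^D)⁻¹ := by
  rw [fminus, mul_inv, ← Finset.prod_inv_distrib]
  simp [inv_inv]

set_option maxHeartbeats 1000000 in
lemma pointwise_bound {D : ℕ} {N : ℕ → ℕ} {T : Set (List (Fin D → ℕ))}
    (hN : ∀ k, 2 ≤ N k) (hT : IsTree D N T) (f : ℝ → ℝ)
    {ρ : ℝ} (hρ0 : 0 < ρ) (hρ1 : ρ ≤ 1) (hfρ : 0 ≤ f ρ) :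
    coverCount ρ (codingMap D N '' branches D T) * ENNReal.ofReal (f ρ) ≤
      ENNReal.ofReal (f ρ / fminus D N T ρ) := by
  classical
  by_cases hbr : (branches D T).Nonempty
  swap
  · rw [Set.not_nonempty_iff_eq_empty.1 hbr, Set.image_empty, coverCount_empty, zero_mul]
    exact zero_le
  obtain ⟨h1, h2⟩ := kIdx_mem hN hρ0 hρ1
  set k := kIdx N ρ with hk
  set s : ℝ := ((Npow N k : ℝ))⁻¹ with hsdef
  have hNpos : (0:ℝ) < (Npow N k : ℝ) := by exact_mod_cast Npow_pos hN k
  have hs0 : 0 < s := by positivity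
  set m : ℕ := ⌈s/(2*ρ)⌉₊ with hmdef
  have hm1 : 1 ≤ m := Nat.one_le_iff_ne_zero.2 (by
    have : 0 < m := Nat.ceil_pos.2 (by positivity)
    omega)
  have hm0 : (0:ℝ) < (m:ℝ) := by exact_mod_cast hm1
  have hsm : s/(2*m) ≤ ρ := by
    have hle := Nat.le_ceil (s/(2*ρ))
    rw [div_le_iff₀ (by positivity)] at hle ⊢
    calc s ≤ (m:ℝ) * (2*ρ) := hle
      _ = ρ * (2 * m) := by ring
  have hmsρ : (m:ℝ) ≤ s/ρ := by
    rcases le_or_gt (s/(2*ρ)) 1 with hc | hc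
    · have : m ≤ 1 := by rw [hmdef]; exact Nat.ceil_le.2 (by simpa using hc)
      have h1s : (1:ℝ) ≤ s/ρ := by rw [le_div_iff₀ hρ0]; simpa using h1
      calc (m:ℝ) ≤ 1 := by exact_mod_cast this
        _ ≤ s/ρ := h1s
    · have hcl : (m:ℝ) < s/(2*ρ) + 1 := Nat.ceil_lt_add_one (le_of_lt (lt_trans one_pos hc))
      have he : s/(2*ρ) + s/(2*ρ) = s/ρ := by field_simp; ring
      linarith
  -- centers
  set xc : List (Fin D → ℕ) → Fin D → ℝ :=
    fun ω i => ∑ j ∈ Finset.range k, ((ω.getD j (fun _ => 0)) i : ℝ)/(Npow N (j+1) : ℝ) with hxc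
  set ctr : List (Fin D → ℕ) → (Fin D → Fin m) → (Fin D → ℝ) :=
    fun ω v i => xc ω i + (2*(v i : ℕ)+1)*s/(2*m) with hctr
  set F : Finset (Fin D → ℝ) :=
    ((TkF D N T k) ×ˢ (Finset.univ : Finset (Fin D → Fin m))).image
      (fun p => ctr p.1 p.2) with hF
  have hcover : (codingMap D N '' branches D T) ⊆ ⋃ x ∈ F, Metric.closedBall x ρ := by
    rintro y ⟨σ, hσ, rfl⟩
    have hdig : ∀ j i, σ j i < N j := branch_digit_lt hT hσ
    set ω : List (Fin D → ℕ) := List.ofFn (fun j : Fin k => σ j) with hω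
    have hωT : ω ∈ T := hσ k
    have hωlen : ω.length = k := by simp [hω]
    have hωTk : ω ∈ TkF D N T k := (mem_TkF hT k).2 ⟨hωT, hωlen⟩
    have hxcω : ∀ i, xc ω i = ∑ j ∈ Finset.range k, (σ j i : ℝ)/(Npow N (j+1) : ℝ) := by
      intro i
      refine Finset.sum_congr rfl fun j hj => ?_
      have hjk : j < k := Finset.mem_range.1 hj
      have : ω.getD j (fun _ => 0) = σ j := by
        rw [List.getD_eq_getElem _ _ (by simp [hωlen, hjk])]
        simp [hω, List.get_ofFn]
      rw [this]
    have htail : ∀ i, 0 ≤ codingMap D N σ i - xc ω i ∧ codingMap D N σ i - xc ω i ≤ s := by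
      intro i
      rw [hxcω i]
      exact coding_tail_bound hN hdig i k
    set v : Fin D → Fin m := fun i =>
      ⟨min ⌊(codingMap D N σ i - xc ω i)*m/s⌋₊ (m-1), by omega⟩ with hv
    have hmem : ctr ω v ∈ F := by
      rw [hF]
      exact Finset.mem_image.2 ⟨(ω, v), Finset.mem_product.2 ⟨hωTk, Finset.mem_univ _⟩, rfl⟩
    refine Set.mem_biUnion hmem ?_
    rw [Metric.mem_closedBall, dist_pi_le_iff hρ0.le]
    intro i
    set t : ℝ := codingMap D N σ i - xc ω i with ht
    obtain ⟨ht0, hts⟩ := htail i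
    set l : ℕ := min ⌊t*m/s⌋₊ (m-1) with hl
    have hlval : ((v i : ℕ)) = l := rfl
    have hlow : (l:ℝ) * (s/m) ≤ t := by
      have h1 : (l:ℝ) ≤ ⌊t*m/s⌋₊ := by exact_mod_cast Nat.cast_le.2 (min_le_left _ _)
      have h2 : (⌊t*m/s⌋₊ : ℝ) ≤ t*m/s := Nat.floor_le (by positivity)
      have h3 : (l:ℝ) ≤ t*m/s := h1.trans h2
      rw [div_le_iff₀ (by positivity)] at *
      calc (l:ℝ) * (s/m) ≤ (t*m/s) * (s/m) := by
            apply mul_le_mul_of_nonneg_right h3 (by positivity)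
        _ = t := by field_simp
    have hhigh : t ≤ ((l:ℝ)+1) * (s/m) := by
      rcases le_or_gt ⌊t*m/s⌋₊ (m-1) with hc | hc
      · have hleq : l = ⌊t*m/s⌋₊ := min_eq_left hc
        have h4 : t*m/s < (⌊t*m/s⌋₊ : ℝ) + 1 := Nat.lt_floor_add_one _
        rw [hleq]
        rw [div_lt_iff₀ hs0] at h4
        have h5 : t * m ≤ ((⌊t*m/s⌋₊:ℝ)+1) * s := h4.le
        calc t = t*(m:ℝ)/m := by field_simp
          _ ≤ ((⌊t*m/s⌋₊:ℝ)+1)*s/m := by gcongr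
          _ = ((⌊t*m/s⌋₊:ℝ)+1)*(s/m) := by ring
      · have hleq : l = m - 1 := min_eq_right (by omega)
        have : ((l:ℝ)+1) = (m:ℝ) := by
          rw [hleq]
          have : (m:ℕ) - 1 + 1 = m := by omega
          exact_mod_cast congrArg (Nat.cast (R := ℝ)) this
        rw [this]
        calc t ≤ s := hts
          _ = (m:ℝ) * (s/m) := by field_simp
    have hdist : dist (codingMap D N σ i) (ctr ω v i) ≤ ρ := by
      rw [Real.dist_eq, hctr]
      simp only [hlval]
      rw [abs_le]
      have hofs : (2*(l:ℝ)+1)*s/(2*m) = (l:ℝ)*(s/m) + s/(2*m) := by field_simp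
      have hofs2 : (2*(l:ℝ)+1)*s/(2*m) + s/(2*m) = ((l:ℝ)+1)*(s/m) := by field_simp; ring
      constructor
      · have : codingMap D N σ i - xc ω i ≥ (l:ℝ)*(s/m) := hlow
        have hnn : (0:ℝ) ≤ s/(2*m) := by positivity
        nlinarith [hsm]
      · nlinarith [hsm, hhigh]
    exact hdist
  have hcard : (F.card : ENNReal) ≤ (((TkF D N T k).card * m^D : ℕ) : ENNReal) := by
    have h5 : F.card ≤ (TkF D N T k).card * m^D := by
      refine le_trans Finset.card_image_le ?_
      rw [Finset.card_product]
      simp [Fintype.card_fun]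
    exact_mod_cast h5
  have hcc : coverCount ρ (codingMap D N '' branches D T) ≤
      (((TkF D N T k).card * m^D : ℕ) : ENNReal) := by
    refine le_trans (le_trans (iInf_le _ F) (iInf_le _ hcover)) hcard
  -- real arithmetic
  have hreal : (((TkF D N T k).card * m^D : ℕ) : ℝ) ≤ (fminus D N T ρ)⁻¹ := by
    have hA := card_TkF_le hN hT k
    have hprod : ∏ j ∈ Finset.range k, ((N j : ℝ)^D * (1 - Pminus D N T j)) =
        (Npow N k : ℝ)^D * ∏ j ∈ Finset.range k, (1 - Pminus D N T j) := by
      rw [Finset.prod_mul_distrib]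
      congr 1
      rw [Finset.prod_pow]
      congr 1
      rw [Npow]
      push_cast
      rfl
    have hm_le : (m:ℝ)^D ≤ (s/ρ)^D := pow_le_pow_left₀ (Nat.cast_nonneg m) hmsρ D
    have hPnn := prod_one_sub_Pminus_nonneg D N T hN k
    have hcardnn : (0:ℝ) ≤ ((TkF D N T k).card : ℝ) := Nat.cast_nonneg _
    have step : (((TkF D N T k).card : ℝ)) * (m:ℝ)^D ≤
        ((Npow N k : ℝ)^D * ∏ j ∈ Finset.range k, (1 - Pminus D N T j)) * (s/ρ)^D := by
      rw [← hprod]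
      apply mul_le_mul hA hm_le (pow_nonneg (Nat.cast_nonneg m) D) (le_trans hcardnn hA)
    have hid : (Npow N k : ℝ)^D * s^D = 1 := by
      rw [hsdef, ← mul_pow, mul_inv_cancel₀ (ne_of_gt hNpos), one_pow]
    have hsimp : ((Npow N k : ℝ)^D * ∏ j ∈ Finset.range k, (1 - Pminus D N T j)) * (s/ρ)^D =
        (∏ j ∈ Finset.range k, (1 - Pminus D N T j)) * (ρ^D)⁻¹ := by
      rw [div_pow, div_eq_mul_inv]
      calc ((Npow N k : ℝ)^D * ∏ j ∈ Finset.range k, (1 - Pminus D N T j)) * (s^D * (ρ^D)⁻¹)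
          = ((Npow N k : ℝ)^D * s^D) * ((∏ j ∈ Finset.range k, (1 - Pminus D N T j)) * (ρ^D)⁻¹) := by
            ring
        _ = _ := by rw [hid, one_mul]
    rw [fminus_inv]
    push_cast
    calc (((TkF D N T k).card : ℝ)) * (m:ℝ)^D ≤ _ := step
      _ = _ := hsimp
  have hofreal : (((TkF D N T k).card * m^D : ℕ) : ENNReal) ≤
      ENNReal.ofReal ((fminus D N T ρ)⁻¹) := by
    rw [← ENNReal.ofReal_natCast]
    exact ENNReal.ofReal_le_ofReal hreal
  calc coverCount ρ (codingMap D N '' branches D T) * ENNReal.ofReal (f ρ) ≤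
      ENNReal.ofReal ((fminus D N T ρ)⁻¹) * ENNReal.ofReal (f ρ) := by
        exact mul_le_mul_left (hcc.trans hofreal) _
    _ = ENNReal.ofReal ((fminus D N T ρ)⁻¹ * f ρ) := by
        refine (ENNReal.ofReal_mul ?_).symm
        refine inv_nonneg.2 (mul_nonneg (Finset.prod_nonneg fun j _ => inv_nonneg.2 ?_)
          (pow_nonneg hρ0.le D))
        linarith [Pminus_le_one D N T j hN]
    _ = ENNReal.ofReal (f ρ / fminus D N T ρ) := by
        rw [div_eq_mul_inv, mul_comm]
open scoped ENNReal NNReal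
set_option maxHeartbeats 1000000 in
lemma hausdorff_le_liminf {X : Type*} [MetricSpace X] [Inhabited X] (f : ℝ → ℝ)
    (hf : ∀ ρ, 0 < ρ → 0 < f ρ) (hf0 : Filter.Tendsto f (nhdsWithin 0 (Set.Ioi 0)) (nhds 0))
    (S : Set X) :
    hausdorffF f S ≤
      Filter.liminf (fun ρ => coverCount ρ S * ENNReal.ofReal (f ρ)) (nhdsWithin 0 (Set.Ioi 0)) := by
  classical
  set L := Filter.liminf (fun ρ => coverCount ρ S * ENNReal.ofReal (f ρ))
    (nhdsWithin 0 (Set.Ioi 0)) with hL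
  rw [hausdorffF]
  refine iSup₂_le fun ε hε => ?_
  refine ENNReal.le_of_forall_pos_le_add fun δ hδ hLtop => ?_
  -- pick a good scale ρ
  have hδ2 : (0:ℝ≥0∞) < (δ:ℝ≥0∞)/2 := by
    simp [ENNReal.div_pos_iff, hδ.ne']
  have hlt : L < L + (δ:ℝ≥0∞)/2 := ENNReal.lt_add_right hLtop.ne hδ2.ne'
  have hfreq : ∃ᶠ ρ in nhdsWithin 0 (Set.Ioi 0),
      coverCount ρ S * ENNReal.ofReal (f ρ) < L + (δ:ℝ≥0∞)/2 :=
    Filter.frequently_lt_of_liminf_lt (h := hlt)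
  have hev : ∀ᶠ ρ in nhdsWithin 0 (Set.Ioi 0), 0 < ρ ∧ ρ < ε := by
    filter_upwards [self_mem_nhdsWithin,
      nhdsWithin_le_nhds (Iio_mem_nhds hε : Set.Iio ε ∈ nhds (0:ℝ))] with ρ h1 h2
    exact ⟨h1, h2⟩
  obtain ⟨ρ, hρlt, hρ0, hρε⟩ : ∃ ρ, (coverCount ρ S * ENNReal.ofReal (f ρ) < L + (δ:ℝ≥0∞)/2) ∧
      0 < ρ ∧ ρ < ε := by
    obtain ⟨ρ, h1, h2, h3⟩ := (hfreq.and_eventually hev).exists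
    exact ⟨ρ, h1, h2, h3⟩
  have hfρ : 0 < f ρ := hf ρ hρ0
  have hfρ' : ENNReal.ofReal (f ρ) ≠ 0 := by
    simp [ENNReal.ofReal_pos.2 hfρ, ne_of_gt]
  have htop : coverCount ρ S ≠ ⊤ := by
    intro h
    rw [h, ENNReal.top_mul hfρ'] at hρlt
    exact absurd hρlt (not_lt.2 le_top)
  have hex : ∃ Fc : Finset X, S ⊆ ⋃ x ∈ Fc, Metric.closedBall x ρ := by
    by_contra h
    push_neg at h
    have : coverCount ρ S = ⊤ := by
      rw [coverCount, eq_top_iff]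
      exact le_iInf fun Fc => le_iInf fun hc => absurd hc (h Fc)
    exact htop this
  set nset : Set ℕ := {n | ∃ Fc : Finset X, (S ⊆ ⋃ x ∈ Fc, Metric.closedBall x ρ) ∧ Fc.card = n}
    with hnset
  have hnne : nset.Nonempty := by
    obtain ⟨Fc, hc⟩ := hex
    exact ⟨Fc.card, Fc, hc, rfl⟩
  have hmem := Nat.sInf_mem hnne
  rw [hnset, Set.mem_setOf_eq] at hmem
  obtain ⟨F₀, hcov, hcard⟩ := hmem
  set n := sInf nset with hn
  have hn_le : (n : ℝ≥0∞) ≤ coverCount ρ S := by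
    refine le_iInf fun Fc => le_iInf fun hc => ?_
    have : n ≤ Fc.card := Nat.sInf_le (show Fc.card ∈ nset from ⟨Fc, hc, rfl⟩)
    exact_mod_cast this
  have hmain : (n : ℝ≥0∞) * ENNReal.ofReal (f ρ) < L + (δ:ℝ≥0∞)/2 :=
    lt_of_le_of_lt (mul_le_mul_left hn_le _) hρlt
  -- junk radii
  have hchoice : ∀ i : ℕ, ∃ r : ℝ, (0 < r ∧ r < ε) ∧ f r < (δ:ℝ)/4 * (1/2)^i := by
    intro i
    have hc : (0:ℝ) < (δ:ℝ)/4 * (1/2)^i := by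
      have : (0:ℝ) < (δ:ℝ) := hδ
      positivity
    exact ((hev.and (hf0.eventually (gt_mem_nhds hc))).exists).imp
      fun r h => ⟨⟨h.1.1, h.1.2⟩, h.2⟩
  choose r hr using hchoice
  -- the cover
  set c : ℕ → X × ℝ := fun i =>
    if h : i < F₀.toList.length then (F₀.toList.get ⟨i, h⟩, ρ) else (default, r i) with hc
  have hlen : F₀.toList.length = n := by rw [Finset.length_toList, hcard]
  have hrad : ∀ i, 0 < (c i).2 ∧ (c i).2 ≤ ε := by
    intro i
    rw [hc]
    by_cases h : i < F₀.toList.length <;> simp only [h, dif_pos, dif_neg, not_false_iff]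
    · exact ⟨hρ0, hρε.le⟩
    · exact ⟨(hr i).1.1, (hr i).1.2.le⟩
  have hcover : S ⊆ ⋃ i, Metric.closedBall (c i).1 (c i).2 := by
    intro y hy
    obtain ⟨x, hxF, hyx⟩ := Set.mem_iUnion₂.1 (hcov hy)
    obtain ⟨j, hjget⟩ := List.mem_iff_get.1 (Finset.mem_toList.2 hxF)
    refine Set.mem_iUnion.2 ⟨j.1, ?_⟩
    rw [hc]
    simp only [j.2, dif_pos]
    have : F₀.toList.get ⟨j.1, j.2⟩ = x := by
      convert hjget
    rw [this]
    exact hyx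
  -- cost bound
  have hcost : ∑' i, ENNReal.ofReal (f (c i).2) ≤
      (n : ℝ≥0∞) * ENNReal.ofReal (f ρ) + (δ:ℝ≥0∞)/2 := by
    have hbound : ∀ i, ENNReal.ofReal (f (c i).2) ≤
        (if i < n then ENNReal.ofReal (f ρ) else 0) +
          ENNReal.ofReal ((δ:ℝ)/4) * (2⁻¹:ℝ≥0∞)^i := by
      intro i
      rw [hc]
      by_cases h : i < F₀.toList.length
      · simp only [h, dif_pos]
        rw [if_pos (hlen ▸ h)]
        exact le_self_add
      · simp only [h, dif_neg, not_false_iff]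
        rw [if_neg (by omega : ¬ i < n)]
        rw [zero_add]
        refine le_trans (ENNReal.ofReal_le_ofReal (hr i).2.le) ?_
        rw [ENNReal.ofReal_mul (by positivity)]
        have heq : ENNReal.ofReal (((1:ℝ)/2)^i) = (2⁻¹:ℝ≥0∞)^i := by
          rw [show ((1:ℝ)/2)^i = ((2:ℝ)⁻¹)^i by norm_num,
            ENNReal.ofReal_pow (by norm_num), ENNReal.ofReal_inv_of_pos (by norm_num),
            ENNReal.ofReal_ofNat]
        rw [heq]
    refine le_trans (ENNReal.tsum_le_tsum hbound) ?_
    rw [ENNReal.tsum_add]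
    gcongr
    · refine le_of_eq ?_
      rw [tsum_eq_sum (s := Finset.range n) (fun b hb => if_neg (by simpa using hb))]
      calc ∑ i ∈ Finset.range n, (if i < n then ENNReal.ofReal (f ρ) else 0)
          = ∑ i ∈ Finset.range n, ENNReal.ofReal (f ρ) :=
            Finset.sum_congr rfl fun i hi => if_pos (Finset.mem_range.1 hi)
        _ = (n : ℝ≥0∞) * ENNReal.ofReal (f ρ) := by
            rw [Finset.sum_const, Finset.card_range, nsmul_eq_mul]
    · rw [ENNReal.tsum_mul_left, ENNReal.tsum_geometric]
      have h12 : (1:ℝ≥0∞) - 2⁻¹ = 2⁻¹ := ENNReal.one_sub_inv_two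
      rw [h12, inv_inv]
      calc ENNReal.ofReal ((δ:ℝ)/4) * 2 = ENNReal.ofReal ((δ:ℝ)/4 * 2) := by
            rw [ENNReal.ofReal_mul (by positivity), ENNReal.ofReal_ofNat]
        _ = ENNReal.ofReal ((δ:ℝ)/2) := by rw [show (δ:ℝ)/4*2 = (δ:ℝ)/2 by ring]
        _ ≤ (δ:ℝ≥0∞)/2 := by
            rw [ENNReal.ofReal_div_of_pos (by norm_num), ENNReal.ofReal_coe_nnreal]
            simp
  refine le_trans (le_trans (iInf_le _ c) (iInf_le _ ⟨hrad, hcover⟩)) ?_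
  calc ∑' i, ENNReal.ofReal (f (c i).2) ≤ (n : ℝ≥0∞) * ENNReal.ofReal (f ρ) + (δ:ℝ≥0∞)/2 := hcost
    _ ≤ (L + (δ:ℝ≥0∞)/2) + (δ:ℝ≥0∞)/2 := by exact add_le_add_left hmain.le _
    _ = L + (δ:ℝ≥0∞) := by rw [add_assoc, ENNReal.add_halves]

/-- Proposition 2.2(ii): for any tree `T*` and dimension function `f`,
`H^f(π(T^∞)) ≤ liminf_{ρ→0} N_ρ(π(T^∞))·f(ρ) ≤ C·liminf_{ρ→0} f(ρ)/f_-(ρ)`, with `C`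
depending only on `D` and the norm. -/
theorem stmt_16 (D : ℕ) (hD : 1 ≤ D) :
    ∃ C : ℝ, 0 < C ∧
      ∀ N : ℕ → ℕ, (∀ k, 2 ≤ N k) →
      ∀ T : Set (List (Fin D → ℕ)), IsTree D N T →
      ∀ f : ℝ → ℝ, (∀ ρ, 0 < ρ → 0 < f ρ) → MonotoneOn f (Set.Ioi 0) →
        Tendsto f (nhdsWithin 0 (Set.Ioi 0)) (nhds 0) →
      hausdorffF f (codingMap D N '' branches D T) ≤
          liminf (fun ρ => coverCount ρ (codingMap D N '' branches D T) * ENNReal.ofReal (f ρ))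
            (nhdsWithin 0 (Set.Ioi 0)) ∧
        liminf (fun ρ => coverCount ρ (codingMap D N '' branches D T) * ENNReal.ofReal (f ρ))
            (nhdsWithin 0 (Set.Ioi 0)) ≤
          ENNReal.ofReal C *
            liminf (fun ρ => ENNReal.ofReal (f ρ / fminus D N T ρ)) (nhdsWithin 0 (Set.Ioi 0)) := by
  refine ⟨1, one_pos, fun N hN T hT f hf hmono hf0 => ?_⟩
  constructor
  · exact hausdorff_le_liminf f hf hf0 _
  · have hev : ∀ᶠ ρ in nhdsWithin (0:ℝ) (Set.Ioi 0),
        coverCount ρ (codingMap D N '' branches D T) * ENNReal.ofReal (f ρ) ≤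
        ENNReal.ofReal (f ρ / fminus D N T ρ) := by
      filter_upwards [self_mem_nhdsWithin,
        nhdsWithin_le_nhds (Iic_mem_nhds one_pos : Set.Iic (1:ℝ) ∈ nhds 0)] with ρ h1 h2
      exact pointwise_bound hN hT f h1 h2 (hf ρ h1).le
    calc liminf (fun ρ => coverCount ρ (codingMap D N '' branches D T) * ENNReal.ofReal (f ρ))
          (nhdsWithin 0 (Set.Ioi 0)) ≤
        liminf (fun ρ => ENNReal.ofReal (f ρ / fminus D N T ρ)) (nhdsWithin 0 (Set.Ioi 0)) :=
          Filter.liminf_le_liminf hev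
      _ = ENNReal.ofReal 1 *
          liminf (fun ρ => ENNReal.ofReal (f ρ / fminus D N T ρ)) (nhdsWithin 0 (Set.Ioi 0)) := by
            rw [ENNReal.ofReal_one, one_mul]
end

section
/- Suppose ψ : (0,∞) → (0,∞) satisfies ψ/ψ_* nonincreasing and ψ(q)/ψ_*(q) → 0 as q → ∞, and the series Σ q^{n−1}ψ^m(q) diverges, where ψ_*(q) = q^{−n/m}. Define f(ρ) = ρ^{mn}·exp(F_ψ(ρ^{−m/(m+n)})) for ρ ≤ ρ₀ and f(ρ) = f(ρ₀) for ρ > ρ₀, where F_ψ(Q) = ∫₁^Q q^{n−1}ψ^m(q) dq. Then for ρ₀ sufficiently small, f is a dimension function (nondecreasing with f(ρ) → 0 as ρ → 0), and for every γ > 0, L_{f,γψ} := liminf_{ρ→0} log(f(ρ)/ρ^{mn}) / F_{γψ}(ρ^{−m/(m+n)}) = γ^{−m}. -/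
open MeasureTheory Filter
open Set


section Stmt18Aux

variable {m n : ℕ} {ψ : ℝ → ℝ}

lemma stmt18_key_eq (hm : 1 ≤ m) (hn : 1 ≤ n) {q : ℝ} (hq : 0 < q) :
    q ^ (n - 1) * ψ q ^ m = (ψ q * q ^ ((n : ℝ) / (m : ℝ))) ^ m * q⁻¹ := by
  have hm0 : (m : ℝ) ≠ 0 := Nat.cast_ne_zero.mpr (by omega)
  have h1 : (q ^ ((n : ℝ) / (m : ℝ))) ^ m = q ^ n := by
    rw [← Real.rpow_natCast (q ^ ((n : ℝ) / (m : ℝ))) m, ← Real.rpow_mul hq.le,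
      div_mul_cancel₀ _ hm0, Real.rpow_natCast]
  rw [mul_pow, h1]
  have h2 : q ^ n = q ^ (n - 1) * q := by
    rw [← pow_succ]; congr 1; omega
  rw [h2]
  field_simp

lemma stmt18_integrable (hm : 1 ≤ m) (hn : 1 ≤ n)
    (hψpos : ∀ q, 0 < q → 0 < ψ q)
    (hmono : AntitoneOn (fun q => ψ q * q ^ ((n : ℝ) / (m : ℝ))) (Set.Ioi 0))
    {x y : ℝ} (hx : 0 < x) (hxy : x ≤ y) :
    IntervalIntegrable (fun q => q ^ (n - 1) * ψ q ^ m) volume x y := by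
  have hsub : uIcc x y ⊆ Ioi 0 := by
    rw [uIcc_of_le hxy]; intro q hq; exact lt_of_lt_of_le hx hq.1
  have hg : AntitoneOn (fun q => (ψ q * q ^ ((n : ℝ) / (m : ℝ))) ^ m) (uIcc x y) := by
    intro a ha b hb hab
    have h0b : (0:ℝ) < b := hsub hb
    exact pow_le_pow_left₀ (mul_nonneg (hψpos b h0b).le (Real.rpow_nonneg h0b.le _))
      (hmono (hsub ha) (hsub hb) hab) m
  have h1 : IntervalIntegrable (fun q => (ψ q * q ^ ((n : ℝ) / (m : ℝ))) ^ m) volume x y :=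
    hg.intervalIntegrable
  have h2 : IntervalIntegrable
      (fun q => (ψ q * q ^ ((n : ℝ) / (m : ℝ))) ^ m * q⁻¹) volume x y := by
    apply h1.mul_continuousOn
    exact ContinuousOn.inv₀ continuousOn_id (fun q hq => (hsub hq).out.ne')
  apply h2.congr
  intro q hq
  rw [uIoc_of_le hxy] at hq
  have hq0 : 0 < q := hx.trans hq.1
  exact (stmt18_key_eq hm hn hq0).symm

lemma stmt18_incr (hm : 1 ≤ m) (hn : 1 ≤ n)
    (hψpos : ∀ q, 0 < q → 0 < ψ q)
    (hmono : AntitoneOn (fun q => ψ q * q ^ ((n : ℝ) / (m : ℝ))) (Set.Ioi 0))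
    {Q₀ Qb Qa : ℝ} (hQ₀ : 1 ≤ Q₀) (hb : Q₀ ≤ Qb) (ha : Qb ≤ Qa)
    (hbound : ∀ q, Q₀ ≤ q → ψ q * q ^ ((n : ℝ) / (m : ℝ)) ≤ 1) :
    (∫ q in Qb..Qa, q ^ (n - 1) * ψ q ^ m) ≤ Real.log Qa - Real.log Qb := by
  have h0b : (0:ℝ) < Qb := lt_of_lt_of_le one_pos (le_trans hQ₀ hb)
  have h0a : (0:ℝ) < Qa := lt_of_lt_of_le h0b ha
  have hint := stmt18_integrable hm hn hψpos hmono h0b ha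
  have hinv : IntervalIntegrable (fun q : ℝ => q⁻¹) volume Qb Qa := by
    apply ContinuousOn.intervalIntegrable
    exact ContinuousOn.inv₀ continuousOn_id
      (fun q hq => by rw [uIcc_of_le ha] at hq; exact (h0b.trans_le hq.1).ne')
  have hle : (∫ q in Qb..Qa, q ^ (n - 1) * ψ q ^ m) ≤ ∫ q in Qb..Qa, q⁻¹ := by
    apply intervalIntegral.integral_mono_on ha hint hinv
    intro q hq
    have hq0 : (0:ℝ) < q := h0b.trans_le hq.1
    rw [stmt18_key_eq hm hn hq0]
    have hg0 : 0 ≤ ψ q * q ^ ((n : ℝ) / (m : ℝ)) :=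
      mul_nonneg (hψpos q hq0).le (Real.rpow_nonneg hq0.le _)
    have hg1 : (ψ q * q ^ ((n : ℝ) / (m : ℝ))) ^ m ≤ 1 :=
      pow_le_one₀ hg0 (hbound q (hb.trans hq.1))
    calc (ψ q * q ^ ((n : ℝ) / (m : ℝ))) ^ m * q⁻¹ ≤ 1 * q⁻¹ :=
          mul_le_mul_of_nonneg_right hg1 (inv_nonneg.mpr hq0.le)
      _ = q⁻¹ := one_mul _
  rw [integral_inv (by rw [uIcc_of_le ha]; exact fun h => h0b.not_ge h.1),
    Real.log_div h0a.ne' h0b.ne'] at hle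
  linarith

lemma stmt18_F_diff (hm : 1 ≤ m) (hn : 1 ≤ n)
    (hψpos : ∀ q, 0 < q → 0 < ψ q)
    (hmono : AntitoneOn (fun q => ψ q * q ^ ((n : ℝ) / (m : ℝ))) (Set.Ioi 0))
    {Q₀ Qb Qa : ℝ} (hQ₀ : 1 ≤ Q₀) (hb : Q₀ ≤ Qb) (ha : Qb ≤ Qa)
    (hbound : ∀ q, Q₀ ≤ q → ψ q * q ^ ((n : ℝ) / (m : ℝ)) ≤ 1) :
    (∫ q in (1:ℝ)..Qa, q ^ (n - 1) * ψ q ^ m) ≤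
      (∫ q in (1:ℝ)..Qb, q ^ (n - 1) * ψ q ^ m) + (Real.log Qa - Real.log Qb) := by
  have h0b : (0:ℝ) < Qb := lt_of_lt_of_le one_pos (le_trans hQ₀ hb)
  have h1b : (1:ℝ) ≤ Qb := le_trans hQ₀ hb
  have hsplit := intervalIntegral.integral_add_adjacent_intervals
    (stmt18_integrable (ψ := ψ) hm hn hψpos hmono one_pos h1b)
    (stmt18_integrable (ψ := ψ) hm hn hψpos hmono h0b ha)
  have := stmt18_incr hm hn hψpos hmono hQ₀ hb ha hbound
  linarith

lemma stmt18_F_pos (hm : 1 ≤ m) (hn : 1 ≤ n)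
    (hψpos : ∀ q, 0 < q → 0 < ψ q)
    (hmono : AntitoneOn (fun q => ψ q * q ^ ((n : ℝ) / (m : ℝ))) (Set.Ioi 0))
    {Q : ℝ} (hQ : 2 ≤ Q) :
    0 < ∫ q in (1:ℝ)..Q, q ^ (n - 1) * ψ q ^ m := by
  have h0Q : (0:ℝ) < Q := lt_of_lt_of_le two_pos hQ
  have h1Q : (1:ℝ) ≤ Q := le_trans one_le_two hQ
  set c : ℝ := (ψ Q * Q ^ ((n : ℝ) / (m : ℝ))) ^ m * Q⁻¹ with hc
  have hgQ : 0 < ψ Q * Q ^ ((n : ℝ) / (m : ℝ)) :=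
    mul_pos (hψpos Q h0Q) (Real.rpow_pos_of_pos h0Q _)
  have hcpos : 0 < c := mul_pos (pow_pos hgQ m) (inv_pos.mpr h0Q)
  have hlow : (Q - 1) * c ≤ ∫ q in (1:ℝ)..Q, q ^ (n - 1) * ψ q ^ m := by
    have : ∫ _q in (1:ℝ)..Q, c = (Q - 1) * c := by
      rw [intervalIntegral.integral_const, smul_eq_mul]
    rw [← this]
    apply intervalIntegral.integral_mono_on h1Q (intervalIntegrable_const)
      (stmt18_integrable hm hn hψpos hmono one_pos h1Q)
    intro q hq
    have hq0 : (0:ℝ) < q := lt_of_lt_of_le one_pos hq.1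
    rw [stmt18_key_eq hm hn hq0]
    have hgq : ψ Q * Q ^ ((n : ℝ) / (m : ℝ)) ≤ ψ q * q ^ ((n : ℝ) / (m : ℝ)) :=
      hmono (mem_Ioi.mpr hq0) (mem_Ioi.mpr h0Q) hq.2
    have h1 : (ψ Q * Q ^ ((n : ℝ) / (m : ℝ))) ^ m ≤ (ψ q * q ^ ((n : ℝ) / (m : ℝ))) ^ m :=
      pow_le_pow_left₀ hgQ.le hgq m
    have h2 : Q⁻¹ ≤ q⁻¹ := inv_anti₀ hq0 hq.2
    exact mul_le_mul h1 h2 (inv_nonneg.mpr h0Q.le) (le_trans (pow_nonneg hgQ.le m) h1)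
  nlinarith

end Stmt18Aux



/-- Construction from the proof of Corollary 1.6: if `ψ/ψ_*` is nonincreasing and tends
to `0`, and the Khinchin series diverges, then for `ρ₀` sufficiently small the function
`f(ρ) = ρ^{mn}·exp(F_ψ(ρ^{-m/(m+n)}))` (truncated at `ρ₀`) is a dimension function and
`L_{f,γψ} = liminf_{ρ→0} log(f(ρ)/ρ^{mn})/F_{γψ}(ρ^{-m/(m+n)}) = γ^{-m}` for all `γ > 0`. -/
theorem stmt_18 (m n : ℕ) (hm : 1 ≤ m) (hn : 1 ≤ n)
    (ψ : ℝ → ℝ) (hψpos : ∀ q, 0 < q → 0 < ψ q)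
    (hmono : AntitoneOn (fun q => ψ q * q ^ ((n : ℝ) / (m : ℝ))) (Set.Ioi 0))
    (hlim : Tendsto (fun q => ψ q * q ^ ((n : ℝ) / (m : ℝ))) atTop (nhds 0))
    (hdiv : ¬ Summable (fun q : ℕ => (q : ℝ) ^ (n - 1) * ψ q ^ m)) :
    ∃ ρ₀ : ℝ, 0 < ρ₀ ∧
      ∀ f : ℝ → ℝ,
        (f = fun ρ => if ρ ≤ ρ₀ then
            ρ ^ (m * n) * Real.exp (∫ q in (1 : ℝ)..(ρ ^ (-(m : ℝ) / ((m : ℝ) + (n : ℝ)))),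
              q ^ (n - 1) * ψ q ^ m)
          else
            ρ₀ ^ (m * n) * Real.exp (∫ q in (1 : ℝ)..(ρ₀ ^ (-(m : ℝ) / ((m : ℝ) + (n : ℝ)))),
              q ^ (n - 1) * ψ q ^ m)) →
        ((∀ ρ, 0 < ρ → 0 < f ρ) ∧ MonotoneOn f (Set.Ioi 0) ∧
            Tendsto f (nhdsWithin 0 (Set.Ioi 0)) (nhds 0)) ∧
          ∀ γ : ℝ, 0 < γ →
            liminf (fun ρ => Real.log (f ρ / ρ ^ (m * n)) /
                (∫ q in (1 : ℝ)..(ρ ^ (-(m : ℝ) / ((m : ℝ) + (n : ℝ)))),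
                  q ^ (n - 1) * (γ * ψ q) ^ m))
              (nhdsWithin 0 (Set.Ioi 0)) = γ ^ (-(m : ℤ)) := by
  -- basic numeric facts
  have hm0 : (0:ℝ) < m := by exact_mod_cast hm
  have hn0 : (0:ℝ) < n := by exact_mod_cast hn
  have hmn0 : (0:ℝ) < (m:ℝ) + n := by linarith
  set e : ℝ := -(m : ℝ) / ((m : ℝ) + (n : ℝ)) with he_def
  have he_neg : e < 0 := div_neg_of_neg_of_pos (by linarith) hmn0
  have he_gt : -1 < e := by
    rw [he_def, neg_div, neg_lt_neg_iff, div_lt_one hmn0]; linarith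
  -- choose Q₀
  obtain ⟨Q₁, hQ₁⟩ := (Filter.eventually_atTop).mp
    (hlim.eventually_lt_const (show (0:ℝ) < 1 by norm_num))
  set Q₀ : ℝ := max 2 Q₁ with hQ₀def
  have hQ₀2 : (2:ℝ) ≤ Q₀ := le_max_left _ _
  have hQ₀1 : (1:ℝ) ≤ Q₀ := by linarith
  have hQ₀pos : (0:ℝ) < Q₀ := by linarith
  have hbound : ∀ q, Q₀ ≤ q → ψ q * q ^ ((n : ℝ) / (m : ℝ)) ≤ 1 :=
    fun q hq => (hQ₁ q (le_trans (le_max_right _ _) hq)).le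
  -- ρ₀
  set ρ₀ : ℝ := Q₀ ^ (1/e) with hρ₀def
  have hρ₀pos : 0 < ρ₀ := Real.rpow_pos_of_pos hQ₀pos _
  have hρ₀e : ρ₀ ^ e = Q₀ := by
    rw [hρ₀def, ← Real.rpow_mul hQ₀pos.le, one_div_mul_cancel he_neg.ne, Real.rpow_one]
  have hQρ : ∀ ρ : ℝ, 0 < ρ → ρ ≤ ρ₀ → Q₀ ≤ ρ ^ e := by
    intro ρ hρ hρ'
    rw [← hρ₀e]
    exact Real.rpow_le_rpow_of_nonpos hρ hρ' he_neg.le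
  refine ⟨ρ₀, hρ₀pos, ?_⟩
  intro f hf
  -- abbreviation for F
  set F : ℝ → ℝ := fun Q => ∫ q in (1:ℝ)..Q, q ^ (n - 1) * ψ q ^ m with hF_def
  -- core monotonicity
  have key : ∀ a b : ℝ, 0 < a → a ≤ b → b ≤ ρ₀ →
      a ^ (m * n) * Real.exp (F (a ^ e)) ≤ b ^ (m * n) * Real.exp (F (b ^ e)) := by
    intro a b h0a hab hb
    have h0b : 0 < b := h0a.trans_le hab
    have hQb : Q₀ ≤ b ^ e := hQρ b h0b hb
    have hQab : b ^ e ≤ a ^ e := Real.rpow_le_rpow_of_nonpos h0a hab he_neg.le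
    have hdiff := stmt18_F_diff (ψ := ψ) hm hn hψpos hmono hQ₀1 hQb hQab hbound
    have hloga : Real.log (a ^ e) = e * Real.log a := Real.log_rpow h0a e
    have hlogb : Real.log (b ^ e) = e * Real.log b := Real.log_rpow h0b e
    rw [hloga, hlogb] at hdiff
    have hlogab : Real.log a ≤ Real.log b := Real.log_le_log h0a hab
    have hmn1 : (1:ℝ) ≤ (m*n : ℕ) := by
      have : 1 ≤ m*n := Nat.one_le_iff_ne_zero.mpr (by positivity)
      exact_mod_cast this
    have hgoal : ((m*n : ℕ) : ℝ) * Real.log a + F (a ^ e) ≤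
        ((m*n : ℕ) : ℝ) * Real.log b + F (b ^ e) := by
      nlinarith [mul_nonneg (show (0:ℝ) ≤ ((m*n:ℕ):ℝ) + e by linarith)
        (show (0:ℝ) ≤ Real.log b - Real.log a by linarith)]
    calc a ^ (m * n) * Real.exp (F (a ^ e))
        = Real.exp (((m*n : ℕ) : ℝ) * Real.log a + F (a ^ e)) := by
          rw [Real.exp_add, ← Real.log_pow, Real.exp_log (pow_pos h0a _)]
      _ ≤ Real.exp (((m*n : ℕ) : ℝ) * Real.log b + F (b ^ e)) := Real.exp_le_exp.mpr hgoal
      _ = b ^ (m * n) * Real.exp (F (b ^ e)) := by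
          rw [Real.exp_add, ← Real.log_pow, Real.exp_log (pow_pos h0b _)]
  constructor
  · refine ⟨?_, ?_, ?_⟩
    · -- positivity
      intro ρ hρ
      rw [hf]
      dsimp only
      split_ifs
      · exact mul_pos (pow_pos hρ _) (Real.exp_pos _)
      · exact mul_pos (pow_pos hρ₀pos _) (Real.exp_pos _)
    · -- monotone
      intro a ha b hb hab
      rw [hf]
      dsimp only
      by_cases hb' : b ≤ ρ₀
      · rw [if_pos hb', if_pos (hab.trans hb')]
        exact key a b ha hab hb'
      · rw [if_neg hb']
        by_cases ha' : a ≤ ρ₀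
        · rw [if_pos ha']
          exact key a ρ₀ ha ha' le_rfl
        · rw [if_neg ha']
  -- tendsto 0
    · have hC : ∀ ρ : ℝ, 0 < ρ → ρ ≤ ρ₀ →
          ρ ^ (m*n) * Real.exp (F (ρ ^ e)) ≤
            Real.exp ((((m*n:ℕ):ℝ) + e) * Real.log ρ + (F Q₀ - Real.log Q₀)) := by
        intro ρ hρ hρ'
        have hQ : Q₀ ≤ ρ ^ e := hQρ ρ hρ hρ'
        have hdiff := stmt18_F_diff (ψ := ψ) hm hn hψpos hmono hQ₀1 le_rfl hQ hbound
        rw [Real.log_rpow hρ e] at hdiff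
        have : ρ ^ (m*n) * Real.exp (F (ρ ^ e)) =
            Real.exp (((m*n:ℕ):ℝ) * Real.log ρ + F (ρ ^ e)) := by
          rw [Real.exp_add, ← Real.log_pow, Real.exp_log (pow_pos hρ _)]
        rw [this]
        apply Real.exp_le_exp.mpr
        change F (ρ ^ e) ≤ F Q₀ + (e * Real.log ρ - Real.log Q₀) at hdiff
        linarith
      have hcoef : 0 < ((m*n:ℕ):ℝ) + e := by
        have hmn1 : (1:ℝ) ≤ (m*n : ℕ) := by
          have : 1 ≤ m*n := Nat.one_le_iff_ne_zero.mpr (by positivity)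
          exact_mod_cast this
        linarith
      have hB : Tendsto (fun ρ : ℝ => (((m*n:ℕ):ℝ) + e) * Real.log ρ + (F Q₀ - Real.log Q₀))
          (nhdsWithin 0 (Set.Ioi 0)) atBot := by
        apply tendsto_atBot_add_const_right
        exact (Real.tendsto_log_nhdsGT_zero).const_mul_atBot hcoef
      have hExp : Tendsto (fun ρ : ℝ =>
          Real.exp ((((m*n:ℕ):ℝ) + e) * Real.log ρ + (F Q₀ - Real.log Q₀)))
          (nhdsWithin 0 (Set.Ioi 0)) (nhds 0) := Real.tendsto_exp_atBot.comp hB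
      have hmem : Set.Ioo (0:ℝ) ρ₀ ∈ nhdsWithin (0:ℝ) (Set.Ioi 0) :=
        Ioo_mem_nhdsGT_of_mem ⟨le_rfl, hρ₀pos⟩
      apply squeeze_zero' ?_ ?_ hExp
      · filter_upwards [hmem] with ρ hρ
        rw [hf]; dsimp only
        split_ifs
        · exact mul_nonneg (pow_nonneg hρ.1.le _) (Real.exp_pos _).le
        · exact mul_nonneg (pow_nonneg hρ₀pos.le _) (Real.exp_pos _).le
      · filter_upwards [hmem] with ρ hρ
        rw [hf]; dsimp only
        rw [if_pos hρ.2.le]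
        exact hC ρ hρ.1 hρ.2.le
  · -- liminf
    intro γ hγ
    have hγm : (0:ℝ) < γ ^ m := pow_pos hγ m
    have hconst : ∀ᶠ ρ in nhdsWithin (0:ℝ) (Set.Ioi 0),
        Real.log (f ρ / ρ ^ (m * n)) /
            (∫ q in (1 : ℝ)..(ρ ^ e), q ^ (n - 1) * (γ * ψ q) ^ m) = (γ ^ m)⁻¹ := by
      have hmem : Set.Ioo (0:ℝ) ρ₀ ∈ nhdsWithin (0:ℝ) (Set.Ioi 0) :=
        Ioo_mem_nhdsGT_of_mem ⟨le_rfl, hρ₀pos⟩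
      filter_upwards [hmem] with ρ hρ
      have hQ : Q₀ ≤ ρ ^ e := hQρ ρ hρ.1 hρ.2.le
      have hFpos : 0 < F (ρ ^ e) :=
        stmt18_F_pos hm hn hψpos hmono (le_trans hQ₀2 hQ)
      have hnum : Real.log (f ρ / ρ ^ (m * n)) = F (ρ ^ e) := by
        rw [hf]; dsimp only
        rw [if_pos hρ.2.le, mul_comm, mul_div_assoc, div_self (pow_pos hρ.1 (m*n)).ne',
          mul_one, Real.log_exp]
      have hden : (∫ q in (1 : ℝ)..(ρ ^ e), q ^ (n - 1) * (γ * ψ q) ^ m)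
          = γ ^ m * F (ρ ^ e) := by
        have heq : (fun q : ℝ => q ^ (n - 1) * (γ * ψ q) ^ m)
            = fun q : ℝ => γ ^ m * (q ^ (n - 1) * ψ q ^ m) := by
          funext q; rw [mul_pow]; ring
        rw [heq, intervalIntegral.integral_const_mul]
      rw [hnum, hden, div_mul_eq_div_div_swap, div_self hFpos.ne', one_div]
    have : liminf (fun ρ => Real.log (f ρ / ρ ^ (m * n)) /
          (∫ q in (1 : ℝ)..(ρ ^ e), q ^ (n - 1) * (γ * ψ q) ^ m))
        (nhdsWithin (0:ℝ) (Set.Ioi 0)) = (γ ^ m)⁻¹ := by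
      rw [liminf_congr hconst, liminf_const]
    rw [this, zpow_neg, zpow_natCast]
end
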